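/- arXiv:1306.5419 — 3 statements merged into one kernel-verified Lean document; each statement's English description precedes it below -/
import Mathlib

section
/- Let Λ be a partially ordered set as in the context. If T and T′ are jeu de taquin equivalent increasing tableaux of skew shapes in Λ, and [a,b] is any integer interval, then the restrictions T|_{[a,b]} and T′|_{[a,b]} (obtained by removing from each tableau all boxes whose value lies outside [a,b]; these are again increasing tableaux of skew shapes in Λ) are jeu de taquin equivalent. -/
open Classical

noncomputable section

/-- A straight shape in a poset: a finite lower order ideal, given as a `Finset`. -/
def StraightShape {L : Type} [PartialOrder L] (lam : Finset L) : Prop :=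
  ∀ a ∈ lam, ∀ b : L, b ≤ a → b ∈ lam

/-- The shape (set of boxes) of a partially defined tableau. -/
def shapeOf {L : Type} {V : Type} (T : L → Option V) : Set L := {α | T α ≠ none}

/-- `lam ⊆ nu` is a pair of straight shapes, defining the skew shape `nu / lam`. -/
def IsSkewPair {L : Type} [PartialOrder L] (lam nu : Finset L) : Prop :=
  StraightShape lam ∧ StraightShape nu ∧ lam ⊆ nu

/-- `T` is defined on a skew shape `nu / lam`. -/
def HasSkewShape {L : Type} [PartialOrder L] (T : L → Option ℤ) : Prop :=
  ∃ lam nu : Finset L, IsSkewPair lam nu ∧ shapeOf T = (nu : Set L) \ (lam : Set L)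

/-- `T` is strictly increasing along the partial order. -/
def Increasing {L : Type} [PartialOrder L] (T : L → Option ℤ) : Prop :=
  ∀ a b : L, a < b → ∀ x y : ℤ, T a = some x → T b = some y → x < y

/-- An increasing tableau of skew shape. -/
def IncreasingSkewTableau {L : Type} [PartialOrder L] (T : L → Option ℤ) : Prop :=
  HasSkewShape T ∧ Increasing T

/-- Two boxes are neighbors if one covers the other. -/
def Neighbor {L : Type} [PartialOrder L] (a b : L) : Prop := a ⋖ b ∨ b ⋖ a

/-- The swap operation `swap_{s,s'}`. -/
def swapVal {L : Type} [PartialOrder L] {V : Type} (s s' : V) (T : L → Option V) :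
    L → Option V := fun α =>
  if T α = some s ∧ ∃ β, Neighbor α β ∧ T β = some s' then some s'
  else if T α = some s' ∧ ∃ β, Neighbor α β ∧ T β = some s then some s
  else T α

/-- Integer values extended with a dot `•`. -/
abbrev ZDot : Type := ℤ ⊕ Unit

def toDotted {L : Type} (T : L → Option ℤ) : L → Option ZDot := fun α => (T α).map Sum.inl

/-- Place a dot in every box of `C`. -/
def addDots {L : Type} (C : Finset L) (T : L → Option ZDot) : L → Option ZDot := fun α =>
  if α ∈ C then some (Sum.inr ()) else T α

/-- Restrict a dotted tableau to its integer-valued boxes. -/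
def restrictInt {L : Type} (T : L → Option ZDot) : L → Option ℤ := fun α =>
  (T α).bind (Sum.elim some fun _ => none)

/-- Apply `swap_{a,•}, swap_{a+1,•}, …, swap_{a+n-1,•}` in this (increasing) order. -/
def swapUp {L : Type} [PartialOrder L] (a : ℤ) : ℕ → (L → Option ZDot) → (L → Option ZDot)
  | 0, T => T
  | n + 1, T => swapVal (Sum.inl (a + n)) (Sum.inr ()) (swapUp a n T)

/-- Apply `swap_{b,•}, swap_{b-1,•}, …, swap_{b-n+1,•}` in this (decreasing) order. -/
def swapDown {L : Type} [PartialOrder L] (b : ℤ) : ℕ → (L → Option ZDot) → (L → Option ZDot)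
  | 0, T => T
  | n + 1, T => swapVal (Sum.inl (b - n)) (Sum.inr ()) (swapDown b n T)

/-- All values of `T` lie in the interval `[a, b]`. -/
def ValuesIn {L : Type} (T : L → Option ℤ) (a b : ℤ) : Prop :=
  ∀ (α : L) (x : ℤ), T α = some x → a ≤ x ∧ x ≤ b

/-- `T'` is obtained from `T` by a single forward jeu de taquin slide `jdt_C`,
starting from a set `C` of maximal boxes of the inner shape. -/
def IsForwardSlide {L : Type} [PartialOrder L] (T T' : L → Option ℤ) : Prop :=
  ∃ (lam nu C : Finset L) (a b : ℤ),
    IsSkewPair lam nu ∧ shapeOf T = (nu : Set L) \ (lam : Set L) ∧ ValuesIn T a b ∧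
    (∀ c ∈ C, c ∈ lam ∧ ∀ d ∈ lam, ¬ c < d) ∧
    T' = restrictInt (swapUp a (b - a + 1).toNat (addDots C (toDotted T)))

/-- `T'` is obtained from `T` by a single reverse jeu de taquin slide,
starting from a set `C` of minimal boxes of the complement of the outer shape. -/
def IsReverseSlide {L : Type} [PartialOrder L] (T T' : L → Option ℤ) : Prop :=
  ∃ (lam nu C : Finset L) (a b : ℤ),
    IsSkewPair lam nu ∧ shapeOf T = (nu : Set L) \ (lam : Set L) ∧ ValuesIn T a b ∧
    (∀ c ∈ C, c ∉ nu ∧ ∀ d : L, d ∉ nu → ¬ d < c) ∧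
    T' = restrictInt (swapDown b (b - a + 1).toNat (addDots C (toDotted T)))

/-- Jeu de taquin equivalence: a finite sequence of forward and reverse slides. -/
def JdtEquiv {L : Type} [PartialOrder L] (T T' : L → Option ℤ) : Prop :=
  Relation.ReflTransGen (fun A B => IsForwardSlide A B ∨ IsReverseSlide A B) T T'

/-- `T` is defined on a straight shape. -/
def HasStraightShape {L : Type} [PartialOrder L] (T : L → Option ℤ) : Prop :=
  ∃ lam : Finset L, StraightShape lam ∧ shapeOf T = (lam : Set L)

/-- `U` is a rectification of `T`: a straight-shape tableau obtained by forward slides. -/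
def RectifiesTo {L : Type} [PartialOrder L] (T U : L → Option ℤ) : Prop :=
  Relation.ReflTransGen IsForwardSlide T U ∧ HasStraightShape U

/-- Unique rectification target. -/
def IsURT {L : Type} [PartialOrder L] (U : L → Option ℤ) : Prop :=
  HasStraightShape U ∧ Increasing U ∧
    ∀ T : L → Option ℤ, IncreasingSkewTableau T → RectifiesTo T U →
      ∀ U' : L → Option ℤ, RectifiesTo T U' → U' = U

/-- The minimal increasing tableau of a shape `θ`: each box `α` receives the maximal
cardinality of a totally ordered subset of `θ` having `α` as its maximal element. -/
def minTab {L : Type} [PartialOrder L] (θ : Finset L) : L → Option ℤ := fun α =>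
  if α ∈ θ then
    some ((sSup {n : ℕ | ∃ s : Finset L, (s : Set L) ⊆ (θ : Set L) ∧
      (∀ a ∈ s, ∀ b ∈ s, a ≤ b ∨ b ≤ a) ∧ α ∈ s ∧ (∀ a ∈ s, a ≤ α) ∧ s.card = n} : ℕ) : ℤ)
  else none

/-- A unique rectification poset. -/
def IsURP (L : Type) [PartialOrder L] : Prop :=
  ∀ lam : Finset L, StraightShape lam → IsURT (minTab lam)

/-- The structure constant `c^ν_{λ,μ}`: the number of increasing tableaux of
shape `ν/λ` that have the minimal increasing tableau `M_μ` as a rectification. -/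
def ccoef {L : Type} [PartialOrder L] (lam mu nu : Finset L) : ℕ :=
  Set.ncard {T : L → Option ℤ | Increasing T ∧ shapeOf T = (nu : Set L) \ (lam : Set L) ∧
    RectifiesTo T (minTab mu)}

/-- The restriction `T|_{[a,b]}`: remove all boxes whose value lies outside `[a,b]`. -/
def restrictVals {L : Type} (T : L → Option ℤ) (a b : ℤ) : L → Option ℤ := fun α =>
  (T α).bind fun x => if a ≤ x ∧ x ≤ b then some x else none

namespace Jdt

variable {L : Type} [PartialOrder L]

/-- notation for the dot value -/
abbrev dotv : ZDot := Sum.inr ()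
abbrev iv (x : ℤ) : ZDot := Sum.inl x

abbrev hasNbr (F : L → Option ZDot) (s : ZDot) (α : L) : Prop := ∃ β, Neighbor α β ∧ F β = some s

lemma Neighbor.symm {a b : L} (h : Neighbor a b) : Neighbor b a := h.elim Or.inr Or.inl

lemma swapVal_none_iff (v : ℤ) (F : L → Option ZDot) (α : L) :
    swapVal (iv v) dotv F α = none ↔ F α = none := by
  unfold swapVal
  split_ifs with h1 h2 <;> simp_all

lemma swap_eq_dot_iff (v : ℤ) (F : L → Option ZDot) (α : L) :
    swapVal (iv v) dotv F α = some dotv ↔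
      ((F α = some (iv v) ∧ hasNbr F dotv α) ∨ (F α = some dotv ∧ ¬ hasNbr F (iv v) α)) := by
  unfold swapVal hasNbr
  split_ifs with h1 h2 <;> (simp_all [hasNbr]; try tauto)

lemma swap_eq_iv_iff (v x : ℤ) (F : L → Option ZDot) (α : L) :
    swapVal (iv v) dotv F α = some (iv x) ↔
      ((x = v ∧ F α = some dotv ∧ hasNbr F (iv v) α) ∨
        (F α = some (iv x) ∧ ¬ (F α = some (iv v) ∧ hasNbr F dotv α))) := by
  unfold swapVal hasNbr
  split_ifs with h1 h2
  · simp_all [hasNbr]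
  · simp_all [hasNbr]
    exact eq_comm
  · simp_all [hasNbr]

/-- ints with value different from the swapped value are untouched, pointwise iff -/
lemma swap_iv_ne_iff (v x : ℤ) (hx : x ≠ v) (F : L → Option ZDot) (α : L) :
    swapVal (iv v) dotv F α = some (iv x) ↔ F α = some (iv x) := by
  rw [swap_eq_iv_iff]
  constructor
  · rintro (⟨rfl, _⟩ | ⟨h, _⟩); · exact absurd rfl hx
    · exact h
  · intro h
    refine Or.inr ⟨h, ?_⟩
    rintro ⟨h', _⟩; rw [h] at h'; simp at h'; exact hx h'

lemma exists_covby_up {S : Set L} (hfin : S.Finite)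
    (hconv : ∀ α β z, α ∈ S → β ∈ S → α < z → z < β → z ∈ S)
    {α β : L} (hα : α ∈ S) (hβ : β ∈ S) (h : α < β) :
    ∃ γ, α ⋖ γ ∧ γ ≤ β ∧ γ ∈ S := by
  have hsub : {z | α < z ∧ z ≤ β} ⊆ S := by
    rintro z ⟨h1, h2⟩
    rcases eq_or_lt_of_le h2 with rfl | h2
    exacts [hβ, hconv α β z hα hβ h1 h2]
  have hfin' : {z | α < z ∧ z ≤ β}.Finite := hfin.subset hsub
  obtain ⟨γ, hγ, hmin⟩ := hfin'.toFinset.exists_minimal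
    ⟨β, by simp only [Set.Finite.mem_toFinset, Set.mem_setOf_eq]; exact ⟨h, le_refl β⟩⟩
  rw [Set.Finite.mem_toFinset, Set.mem_setOf_eq] at hγ
  refine ⟨γ, ⟨hγ.1, fun z hz1 hz2 => ?_⟩, hγ.2, hsub hγ⟩
  refine absurd (@hmin z (show z ∈ hfin'.toFinset from ?_) hz2.le) hz2.not_ge
  rw [Set.Finite.mem_toFinset, Set.mem_setOf_eq]
  exact ⟨hz1, le_of_lt (lt_of_lt_of_le hz2 hγ.2)⟩

lemma exists_covby_down {S : Set L} (hfin : S.Finite)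
    (hconv : ∀ α β z, α ∈ S → β ∈ S → α < z → z < β → z ∈ S)
    {α β : L} (hα : α ∈ S) (hβ : β ∈ S) (h : α < β) :
    ∃ γ, γ ⋖ β ∧ α ≤ γ ∧ γ ∈ S := by
  have hsub : {z | α ≤ z ∧ z < β} ⊆ S := by
    rintro z ⟨h1, h2⟩
    rcases eq_or_lt_of_le h1 with rfl | h1
    exacts [hα, hconv α β z hα hβ h1 h2]
  have hfin' : {z | α ≤ z ∧ z < β}.Finite := hfin.subset hsub
  obtain ⟨γ, hγ, hmax⟩ := hfin'.toFinset.exists_maximal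
    ⟨α, by simp only [Set.Finite.mem_toFinset, Set.mem_setOf_eq]; exact ⟨le_refl α, h⟩⟩
  rw [Set.Finite.mem_toFinset, Set.mem_setOf_eq] at hγ
  refine ⟨γ, ⟨hγ.2, fun z hz1 hz2 => ?_⟩, hγ.1, hsub hγ⟩
  refine absurd (@hmax z (show z ∈ hfin'.toFinset from ?_) hz1.le) hz1.not_ge
  rw [Set.Finite.mem_toFinset, Set.mem_setOf_eq]
  exact ⟨le_of_lt (lt_of_le_of_lt hγ.1 hz1), hz2⟩

structure Good (S : Set L) (T0 : L → Option ℤ) (k : ℤ) (F : L → Option ZDot) : Prop where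
  supp : ∀ α, F α = none ↔ α ∉ S
  big : ∀ α x, T0 α = some x → k < x → F α = some (iv x)
  big2 : ∀ α x, F α = some (iv x) → k < x → T0 α = some x
  inc : ∀ α β x y, α < β → F α = some (iv x) → F β = some (iv y) → x < y
  blo : ∀ α β y, α < β → F α = some dotv → F β = some (iv y) → k < y
  chi : ∀ α β x, α < β → F α = some (iv x) → F β = some dotv → x ≤ k
  anti : ∀ α β, α < β → F α = some dotv → F β = some dotv → False
  vals : ∀ α x, F α = some (iv x) → ∃ β, T0 β = some x

structure Setting (S : Set L) (T0 : L → Option ℤ) (C : Finset L) (A : ℤ) : Prop where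
  hS : S = {α | T0 α ≠ none} ∪ ↑C
  fin : S.Finite
  convex : ∀ α β z, α ∈ S → β ∈ S → α < z → z < β → z ∈ S
  inc0 : Increasing T0
  hC : ∀ c ∈ C, T0 c = none
  lowv : ∀ α x, T0 α = some x → A ≤ x
  nlt : ∀ α c, T0 α ≠ none → c ∈ C → ¬ α < c
  antiC : ∀ c ∈ C, ∀ d ∈ C, ¬ c < d

lemma good_base {S : Set L} {T0 : L → Option ℤ} {C : Finset L} {A : ℤ}
    (st : Setting S T0 C A) : Good S T0 (A - 1) (addDots C (toDotted T0)) := by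
  have heval : ∀ α : L, (α ∈ C ∧ addDots C (toDotted T0) α = some dotv ∧ T0 α = none) ∨
      (α ∉ C ∧ addDots C (toDotted T0) α = (T0 α).map Sum.inl) := by
    intro α
    by_cases hc : α ∈ C
    · exact Or.inl ⟨hc, by simp [addDots, hc], st.hC α hc⟩
    · exact Or.inr ⟨hc, by simp [addDots, toDotted, hc]⟩
  have hdot : ∀ α : L, addDots C (toDotted T0) α = some dotv ↔ α ∈ C := by
    intro α
    rcases heval α with ⟨hc, he, _⟩ | ⟨hc, he⟩
    · simp [he, hc]
    · rw [he]
      cases hT : T0 α <;> simp [hT, hc, dotv]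
  have hiv : ∀ (α : L) (x : ℤ), addDots C (toDotted T0) α = some (iv x) ↔ T0 α = some x := by
    intro α x
    rcases heval α with ⟨hc, he, h0⟩ | ⟨hc, he⟩
    · simp [he, h0, dotv, iv]
    · rw [he]; cases hT : T0 α <;> simp [hT, iv]
  constructor
  · intro α
    rcases heval α with ⟨hc, he, _⟩ | ⟨hc, he⟩
    · simp [he, st.hS, hc]
    · rw [he, st.hS]
      cases hT : T0 α <;> simp [hT, hc]
  · intro α x h _; exact (hiv α x).mpr h
  · intro α x h _; exact (hiv α x).mp h
  · intro α β x y hab ha hb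
    exact st.inc0 α β hab x y ((hiv α x).mp ha) ((hiv β y).mp hb)
  · intro α β y _ _ hb
    have := st.lowv β y ((hiv β y).mp hb); omega
  · intro α β x hab ha hb
    exact absurd hab (st.nlt α β (by rw [(hiv α x).mp ha]; simp) ((hdot β).mp hb))
  · intro α β hab ha hb
    exact st.antiC α ((hdot α).mp ha) β ((hdot β).mp hb) hab
  · intro α x h; exact ⟨α, (hiv α x).mp h⟩

lemma Good.step {S : Set L} {T0 : L → Option ℤ} {C : Finset L} {A : ℤ}
    (st : Setting S T0 C A) {k : ℤ} {F : L → Option ZDot}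
    (g : Good S T0 k F) :
    Good S T0 (k + 1) (swapVal (iv (k + 1)) dotv F) := by
  have hmem : ∀ α : L, F α ≠ none → α ∈ S := by
    intro α h; by_contra hx; exact h ((g.supp α).mpr hx)
  have chainUp : ∀ α β : L, α < β → F α ≠ none → F β ≠ none →
      ∃ γ, α ⋖ γ ∧ γ ≤ β ∧ F γ ≠ none := by
    intro α β h hα hβ
    obtain ⟨γ, h1, h2, h3⟩ := exists_covby_up st.fin st.convex (hmem α hα) (hmem β hβ) h
    exact ⟨γ, h1, h2, fun hn => ((g.supp γ).mp hn) h3⟩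
  have chainDown : ∀ α β : L, α < β → F α ≠ none → F β ≠ none →
      ∃ γ, γ ⋖ β ∧ α ≤ γ ∧ F γ ≠ none := by
    intro α β h hα hβ
    obtain ⟨γ, h1, h2, h3⟩ := exists_covby_down st.fin st.convex (hmem α hα) (hmem β hβ) h
    exact ⟨γ, h1, h2, fun hn => ((g.supp γ).mp hn) h3⟩
  constructor
  · exact fun α => (swapVal_none_iff (k+1) F α).trans (g.supp α)
  · intro α x hT0 hx
    exact (swap_iv_ne_iff (k+1) x (by omega) F α).mpr (g.big α x hT0 (by omega))
  · intro α x hE hx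
    exact g.big2 α x ((swap_iv_ne_iff (k+1) x (by omega) F α).mp hE) (by omega)
  · -- inc
    intro α β x y hab hEα hEβ
    rcases (swap_eq_iv_iff (k+1) x F α).mp hEα with ⟨hxv, hFα, hnbα⟩ | ⟨hFα, hcondα⟩
    · rcases (swap_eq_iv_iff (k+1) y F β).mp hEβ with ⟨hyv, hFβ, hnbβ⟩ | ⟨hFβ, hcondβ⟩
      · exact (g.anti α β hab hFα hFβ).elim
      · have hky : k < y := g.blo α β y hab hFα hFβ
        rcases eq_or_ne y (k+1) with rfl | hyne
        · exfalso
          obtain ⟨γ, hcov, hle, hγ⟩ := chainUp α β hab (by simp [hFα]) (by simp [hFβ])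
          rcases eq_or_lt_of_le hle with rfl | hlt
          · exact hcondβ ⟨hFβ, ⟨α, (Or.inl hcov : Neighbor α γ).symm, hFα⟩⟩
          · cases hFγ : F γ with
            | none => exact hγ hFγ
            | some w =>
              cases w with
              | inl z =>
                have h1 : k < z := g.blo α γ z hcov.lt hFα hFγ
                have h2 : z < k + 1 := g.inc γ β z (k+1) hlt hFγ hFβ
                omega
              | inr u => exact g.anti α γ hcov.lt hFα hFγ
        · omega
    · rcases (swap_eq_iv_iff (k+1) y F β).mp hEβ with ⟨hyv, hFβ, hnbβ⟩ | ⟨hFβ, hcondβ⟩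
      · have := g.chi α β x hab hFα hFβ; omega
      · exact g.inc α β x y hab hFα hFβ
  · -- blo
    intro α β y hab hEα hEβ
    rcases (swap_eq_dot_iff (k+1) F α).mp hEα with ⟨hFα, hdnα⟩ | ⟨hFα, hvnα⟩
    · rcases (swap_eq_iv_iff (k+1) y F β).mp hEβ with ⟨hyv, hFβ, hnbβ⟩ | ⟨hFβ, hcondβ⟩
      · have := g.chi α β (k+1) hab hFα hFβ; omega
      · have := g.inc α β (k+1) y hab hFα hFβ; omega
    · rcases (swap_eq_iv_iff (k+1) y F β).mp hEβ with ⟨hyv, hFβ, hnbβ⟩ | ⟨hFβ, hcondβ⟩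
      · exact (g.anti α β hab hFα hFβ).elim
      · have hky : k < y := g.blo α β y hab hFα hFβ
        rcases eq_or_ne y (k+1) with rfl | hyne
        · exfalso
          obtain ⟨γ, hcov, hle, hγ⟩ := chainUp α β hab (by simp [hFα]) (by simp [hFβ])
          rcases eq_or_lt_of_le hle with rfl | hlt
          · exact hvnα ⟨γ, Or.inl hcov, hFβ⟩
          · cases hFγ : F γ with
            | none => exact hγ hFγ
            | some w =>
              cases w with
              | inl z =>
                have h1 : k < z := g.blo α γ z hcov.lt hFα hFγ
                have h2 : z < k + 1 := g.inc γ β z (k+1) hlt hFγ hFβ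
                omega
              | inr u => exact g.anti α γ hcov.lt hFα hFγ
        · omega
  · -- chi
    intro α β x hab hEα hEβ
    rcases (swap_eq_iv_iff (k+1) x F α).mp hEα with ⟨hxv, hFα, hnbα⟩ | ⟨hFα, hcondα⟩
    · omega
    · rcases (swap_eq_dot_iff (k+1) F β).mp hEβ with ⟨hFβ, hdnβ⟩ | ⟨hFβ, hvnβ⟩
      · have := g.inc α β x (k+1) hab hFα hFβ; omega
      · have := g.chi α β x hab hFα hFβ; omega
  · -- anti
    intro α β hab hEα hEβ
    rcases (swap_eq_dot_iff (k+1) F α).mp hEα with ⟨hFα, hdnα⟩ | ⟨hFα, hvnα⟩ <;>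
      rcases (swap_eq_dot_iff (k+1) F β).mp hEβ with ⟨hFβ, hdnβ⟩ | ⟨hFβ, hvnβ⟩
    · exact absurd (g.inc α β (k+1) (k+1) hab hFα hFβ) (lt_irrefl _)
    · obtain ⟨γ, hcov, hle, hγ⟩ := chainDown α β hab (by simp [hFα]) (by simp [hFβ])
      rcases eq_or_lt_of_le hle with rfl | hlt
      · exact hvnβ ⟨α, Or.inr hcov, hFα⟩
      · cases hFγ : F γ with
        | none => exact hγ hFγ
        | some w =>
          cases w with
          | inl z =>
            have h1 : k + 1 < z := g.inc α γ (k+1) z hlt hFα hFγ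
            have h2 : z ≤ k := g.chi γ β z hcov.lt hFγ hFβ
            omega
          | inr u => exact g.anti γ β hcov.lt hFγ hFβ
    · obtain ⟨γ, hcov, hle, hγ⟩ := chainUp α β hab (by simp [hFα]) (by simp [hFβ])
      rcases eq_or_lt_of_le hle with rfl | hlt
      · exact hvnα ⟨γ, Or.inl hcov, hFβ⟩
      · cases hFγ : F γ with
        | none => exact hγ hFγ
        | some w =>
          cases w with
          | inl z =>
            have h1 : k < z := g.blo α γ z hcov.lt hFα hFγ
            have h2 : z < k + 1 := g.inc γ β z (k+1) hlt hFγ hFβ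
            omega
          | inr u => exact g.anti α γ hcov.lt hFα hFγ
    · exact g.anti α β hab hFα hFβ
  · -- vals
    intro α x hE
    rcases (swap_eq_iv_iff (k+1) x F α).mp hE with ⟨hxv, hFα, hnb⟩ | ⟨hFα, _⟩
    · obtain ⟨β, hn, hFβ⟩ := hnb
      exact hxv ▸ g.vals β (k+1) hFβ
    · exact g.vals α x hFα

lemma good_swapUp {S : Set L} {T0 : L → Option ℤ} {C : Finset L} {A : ℤ}
    (st : Setting S T0 C A) (n : ℕ) :
    Good S T0 (A - 1 + n) (swapUp A n (addDots C (toDotted T0))) := by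
  induction n with
  | zero => simpa [swapUp] using good_base st
  | succ n ih =>
    have h2 := Good.step st ih
    have e2 : A - 1 + ((n : ℤ) + 1) = A - 1 + (n : ℤ) + 1 := by ring
    have e3 : A + (n : ℤ) = A - 1 + (n : ℤ) + 1 := by ring
    show Good S T0 (A - 1 + ((n : ℕ) + 1 : ℕ)) (swapVal (iv (A + (n : ℕ))) dotv _)
    push_cast
    rw [e2, e3]
    exact h2

lemma swapUp_add (a : ℤ) (m n : ℕ) (T : L → Option ZDot) :
    swapUp a (m + n) T = swapUp (a + m) n (swapUp a m T) := by
  induction n with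
  | zero => rfl
  | succ n ih =>
    show swapVal (iv (a + ((m + n : ℕ) : ℤ))) dotv (swapUp a (m + n) T)
      = swapVal (iv (a + (m : ℕ) + (n : ℕ))) dotv (swapUp (a + m) n (swapUp a m T))
    rw [ih]
    congr 2
    push_cast; ring

lemma swapUp_iv_stable (a : ℤ) (n : ℕ) (D : L → Option ZDot) (x : ℤ)
    (hx : ∀ i : ℕ, i < n → x ≠ a + i) (α : L) :
    swapUp a n D α = some (iv x) ↔ D α = some (iv x) := by
  induction n with
  | zero => exact Iff.rfl
  | succ n ih =>
    exact (swap_iv_ne_iff (a + n) x (hx n (by omega)) _ α).trans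
      (ih (fun i hi => hx i (by omega)))

def Agree (Q : ℤ → Prop) (D D' : L → Option ZDot) : Prop :=
  ∀ α, D' α = D α ∨ (D' α = none ∧ ∃ x, D α = some (iv x) ∧ Q x)

lemma Agree.swap {Q : ℤ → Prop} {D D' : L → Option ZDot} {v : ℤ} (hv : ¬ Q v)
    (h : Agree Q D D') : Agree Q (swapVal (iv v) dotv D) (swapVal (iv v) dotv D') := by
  have hdot : ∀ β, D' β = some dotv ↔ D β = some dotv := by
    intro β; rcases h β with he | ⟨hn, x, hx, _⟩
    · rw [he]
    · rw [hn, hx]; simp [dotv, iv]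
  have hivv : ∀ β, D' β = some (iv v) ↔ D β = some (iv v) := by
    intro β; rcases h β with he | ⟨hn, x, hx, hQ⟩
    · rw [he]
    · rw [hn, hx]
      constructor
      · intro hh; exact absurd hh (by simp)
      · intro hh
        have : x = v := by simpa [iv] using hh
        exact absurd (this ▸ hQ) hv
  intro α
  rcases h α with he | ⟨hn, x, hx, hQ⟩
  · left
    have c1 : (D' α = some (iv v) ∧ ∃ β, Neighbor α β ∧ D' β = some dotv) ↔
        (D α = some (iv v) ∧ ∃ β, Neighbor α β ∧ D β = some dotv) := by
      rw [he]
      constructor <;> rintro ⟨h1, β, h2, h3⟩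
      · exact ⟨h1, β, h2, (hdot β).mp h3⟩
      · exact ⟨h1, β, h2, (hdot β).mpr h3⟩
    have c2 : (D' α = some dotv ∧ ∃ β, Neighbor α β ∧ D' β = some (iv v)) ↔
        (D α = some dotv ∧ ∃ β, Neighbor α β ∧ D β = some (iv v)) := by
      rw [he]
      constructor <;> rintro ⟨h1, β, h2, h3⟩
      · exact ⟨h1, β, h2, (hivv β).mp h3⟩
      · exact ⟨h1, β, h2, (hivv β).mpr h3⟩
    unfold swapVal
    by_cases h1 : D α = some (iv v) ∧ ∃ β, Neighbor α β ∧ D β = some dotv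
    · rw [if_pos (c1.mpr h1), if_pos h1]
    · rw [if_neg (fun hh => h1 (c1.mp hh)), if_neg h1]
      by_cases h2 : D α = some dotv ∧ ∃ β, Neighbor α β ∧ D β = some (iv v)
      · rw [if_pos (c2.mpr h2), if_pos h2]
      · rw [if_neg (fun hh => h2 (c2.mp hh)), if_neg h2, he]
  · right
    have hne : x ≠ v := fun e => hv (e ▸ hQ)
    exact ⟨(swapVal_none_iff v D' α).mpr hn, x, (swap_iv_ne_iff v x hne D α).mpr hx, hQ⟩

lemma Agree.swapUpChunk {Q : ℤ → Prop} {D D' : L → Option ZDot} (a : ℤ) (n : ℕ)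
    (hv : ∀ i : ℕ, i < n → ¬ Q (a + i)) (h : Agree Q D D') :
    Agree Q (swapUp a n D) (swapUp a n D') := by
  induction n with
  | zero => exact h
  | succ n ih =>
    exact Agree.swap (hv n (by omega)) (ih (fun i hi => hv i (by omega)))

lemma restrictInt_some_iff (D : L → Option ZDot) (α : L) (x : ℤ) :
    restrictInt D α = some x ↔ D α = some (iv x) := by
  unfold restrictInt
  cases hD : D α with
  | none => simp
  | some w => cases w <;> simp [iv]

lemma restrictVals_some_iff (T : L → Option ℤ) (a b : ℤ) (α : L) (x : ℤ) :
    restrictVals T a b α = some x ↔ T α = some x ∧ a ≤ x ∧ x ≤ b := by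
  unfold restrictVals
  cases hT : T α with
  | none => simp
  | some y =>
    simp only [Option.bind_some]
    split_ifs with hy
    · constructor
      · rintro h; injection h with h; exact ⟨h ▸ rfl, h ▸ hy⟩
      · rintro ⟨h, _⟩; injection h with h; rw [h]
    · constructor
      · rintro h; exact absurd h (by simp)
      · rintro ⟨h, hx⟩; injection h with h; exact absurd (h ▸ hx) hy

lemma restrictVals_none_iff (T : L → Option ℤ) (a b : ℤ) (α : L) :
    restrictVals T a b α = none ↔ ∀ x, T α = some x → ¬ (a ≤ x ∧ x ≤ b) := by
  unfold restrictVals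
  cases hT : T α with
  | none => simp
  | some y =>
    simp only [Option.bind_some]
    split_ifs with hy
    · simp [hy]
    · simp only [hy]
      simp
      omega

lemma restrictVals_congr {T : L → Option ℤ} {a b a' b' : ℤ}
    (h : ∀ α x, T α = some x → ((a ≤ x ∧ x ≤ b) ↔ (a' ≤ x ∧ x ≤ b'))) :
    restrictVals T a b = restrictVals T a' b' := by
  funext α
  cases hT : restrictVals T a' b' α with
  | none =>
    rw [restrictVals_none_iff] at hT ⊢
    intro x hx hab
    exact hT x hx ((h α x hx).mp hab)
  | some x =>
    rw [restrictVals_some_iff] at hT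
    rw [restrictVals_some_iff]
    exact ⟨hT.1, (h α x hT.1).mpr hT.2⟩

lemma option_ext' {β : Type} {o1 o2 : Option β} (h : ∀ x, o1 = some x ↔ o2 = some x) :
    o1 = o2 := by
  cases o1 with
  | none =>
    cases o2 with
    | none => rfl
    | some x => exact (h x).mpr rfl
  | some x => exact ((h x).mp rfl).symm

lemma slide_good {S : Set L} {T0 : L → Option ℤ} {C : Finset L} {A B : ℤ}
    (st : Setting S T0 C A) :
    Good S T0 (A - 1 + (B - A + 1).toNat) (swapUp A (B - A + 1).toNat (addDots C (toDotted T0))) :=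
  good_swapUp st _

lemma slide_inc {S : Set L} {T0 : L → Option ℤ} {C : Finset L} {A B : ℤ}
    (st : Setting S T0 C A) (hup : ∀ α x, T0 α = some x → x ≤ B) :
    Increasing (restrictInt (swapUp A (B - A + 1).toNat (addDots C (toDotted T0)))) ∧
    ValuesIn (restrictInt (swapUp A (B - A + 1).toNat (addDots C (toDotted T0)))) A B := by
  have g := slide_good (B := B) st
  constructor
  · intro α β h x y hx hy
    rw [restrictInt_some_iff] at hx hy
    exact g.inc α β x y h hx hy
  · intro α x hx
    rw [restrictInt_some_iff] at hx
    obtain ⟨β, hβ⟩ := g.vals α x hx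
    exact ⟨st.lowv β x hβ, hup β x hβ⟩

lemma mega {S : Set L} {T0 : L → Option ℤ} {C : Finset L} {A B : ℤ}
    (st : Setting S T0 C A)
    (hup : ∀ α x, T0 α = some x → x ≤ B)
    (a₁ b₁ : ℤ) (hA : A ≤ a₁) (hab : a₁ ≤ b₁) (hB : b₁ ≤ B) :
    ∃ C' : Finset L,
      (∀ c ∈ C', (c ∈ C ∨ ∃ x, T0 c = some x ∧ x < a₁)) ∧
      (∀ c ∈ C', ∀ d : L, (d ∈ C ∨ ∃ x, T0 d = some x ∧ x < a₁) → ¬ c < d) ∧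
      restrictVals (restrictInt (swapUp A (B - A + 1).toNat (addDots C (toDotted T0)))) a₁ b₁
        = restrictInt (swapUp a₁ (b₁ - a₁ + 1).toNat
            (addDots C' (toDotted (restrictVals T0 a₁ b₁)))) := by
  classical
  set base := addDots C (toDotted T0) with hbase
  set m := (a₁ - A).toNat with hm
  set n' := (b₁ - a₁ + 1).toNat with hn'
  set N := (B - A + 1).toNat with hN
  set rest := (B - b₁).toNat with hrest
  have hmZ : (m : ℤ) = a₁ - A := by omega
  have hn'Z : (n' : ℤ) = b₁ - a₁ + 1 := by omega
  have hNeq : N = m + n' + rest := by omega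
  set Dm := swapUp A m base with hDm
  have gm : Good S T0 (a₁ - 1) Dm := by
    have := good_swapUp st m
    rwa [show A - 1 + (m : ℤ) = a₁ - 1 by omega] at this
  have memS : ∀ α : L, α ∈ S ↔ (T0 α ≠ none ∨ α ∈ C) := by
    intro α; rw [st.hS]; simp
  have hdots : {α | Dm α = some dotv} ⊆ S := by
    intro α h
    by_contra hx
    simp only [Set.mem_setOf_eq] at h
    rw [(gm.supp α).mpr hx] at h
    exact absurd h (by simp)
  set C' : Finset L := (st.fin.subset hdots).toFinset with hC'def
  have hC' : ∀ α : L, α ∈ C' ↔ Dm α = some dotv := by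
    intro α; rw [hC'def, Set.Finite.mem_toFinset]; rfl
  have f1 : ∀ c ∈ C', (c ∈ C ∨ ∃ x, T0 c = some x ∧ x < a₁) := by
    intro c hc
    rw [hC'] at hc
    rcases (memS c).mp (hdots hc) with h | h
    · cases hT : T0 c with
      | none => exact absurd hT h
      | some x =>
        refine Or.inr ⟨x, rfl, ?_⟩
        by_contra hx
        have := gm.big c x hT (by omega)
        rw [hc] at this
        exact absurd this (by simp)
    · exact Or.inl h
  have f2 : ∀ c ∈ C', ∀ d : L, (d ∈ C ∨ ∃ x, T0 d = some x ∧ x < a₁) → ¬ c < d := by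
    intro c hc d hd hcd
    rw [hC'] at hc
    have hdS : d ∈ S := by
      rw [memS]
      rcases hd with h | ⟨x, hx, _⟩
      · exact Or.inr h
      · exact Or.inl (by simp [hx])
    cases hDd : Dm d with
    | none => exact ((gm.supp d).mp hDd) hdS
    | some w =>
      cases w with
      | inr u =>
        exact gm.anti c d hcd hc hDd
      | inl y =>
        have h1 : a₁ - 1 < y := gm.blo c d y hcd hc hDd
        have h2 : T0 d = some y := gm.big2 d y hDd (by omega)
        rcases hd with h | ⟨x, hx, hxlt⟩
        · rw [st.hC d h] at h2; exact absurd h2 (by simp)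
        · rw [hx] at h2; injection h2 with h2; omega
  refine ⟨C', f1, f2, ?_⟩
  set T0' := restrictVals T0 a₁ b₁ with hT0'
  have hT0's : ∀ α x, T0' α = some x ↔ (T0 α = some x ∧ a₁ ≤ x ∧ x ≤ b₁) :=
    fun α x => restrictVals_some_iff T0 a₁ b₁ α x
  set S' : Set L := {α | T0' α ≠ none} ∪ ↑C' with hS'def
  have hS'sub : S' ⊆ S := by
    intro α h
    rcases h with h | h
    · simp only [Set.mem_setOf_eq] at h
      cases hT : T0' α with
      | none => exact absurd hT h
      | some x =>
        rw [memS]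
        exact Or.inl (by simp [((hT0's α x).mp hT).1])
    · exact hdots ((hC' α).mp h)
  have memS' : ∀ α : L, α ∈ S' ↔ ((∃ x, T0 α = some x ∧ a₁ ≤ x ∧ x ≤ b₁) ∨ Dm α = some dotv) := by
    intro α
    rw [hS'def]
    simp only [Set.mem_union, Set.mem_setOf_eq, Finset.mem_coe, hC']
    constructor
    · rintro (h | h)
      · cases hT : T0' α with
        | none => exact absurd hT h
        | some x => exact Or.inl ⟨x, (hT0's α x).mp hT⟩
      · exact Or.inr h
    · rintro (⟨x, hx⟩ | h)
      · exact Or.inl (by rw [(hT0's α x).mpr hx]; simp)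
      · exact Or.inr h
  -- the Setting for the truncated tableau
  have st' : Setting S' T0' C' a₁ := by
    constructor
    · rfl
    · exact st.fin.subset hS'sub
    · -- convexity
      intro α β z hα hβ h1 h2
      have hzS : z ∈ S := st.convex α β z (hS'sub hα) (hS'sub hβ) h1 h2
      rw [memS']
      cases hDz : Dm z with
      | none => exact absurd hzS ((gm.supp z).mp hDz)
      | some w =>
        cases w with
        | inr u => exact Or.inr rfl
        | inl y =>
          have hya : a₁ ≤ y := by
            by_contra hy
            rcases (memS' α).mp hα with ⟨x, hx, hax, _⟩ | hdα
            · have := gm.inc α z x y h1 (gm.big α x hx (by omega)) hDz; omega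
            · have := gm.blo α z y h1 hdα hDz; omega
          have hyb : y ≤ b₁ := by
            by_contra hy
            rcases (memS' β).mp hβ with ⟨x, hx, _, hxb⟩ | hdβ
            · have := gm.inc z β y x h2 hDz (gm.big β x hx (by omega)); omega
            · have := gm.chi z β y h2 hDz hdβ; omega
          exact Or.inl ⟨y, gm.big2 z y hDz (by omega), hya, hyb⟩
    · intro α β h x y hx hy
      exact st.inc0 α β h x y ((hT0's α x).mp hx).1 ((hT0's β y).mp hy).1
    · intro c hc
      cases hT : T0' c with
      | none => rfl
      | some x =>
        obtain ⟨hT0c, hax, _⟩ := (hT0's c x).mp hT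
        have := gm.big c x hT0c (by omega)
        rw [(hC' c).mp hc] at this
        exact absurd this (by simp)
    · intro α x hx; exact ((hT0's α x).mp hx).2.1
    · intro α c hα hc hlt
      cases hT : T0' α with
      | none => exact hα hT
      | some x =>
        obtain ⟨hT0a, hax, _⟩ := (hT0's α x).mp hT
        have := gm.chi α c x hlt (gm.big α x hT0a (by omega)) ((hC' c).mp hc)
        omega
    · intro c hc d hd
      exact fun h => gm.anti c d h ((hC' c).mp hc) ((hC' d).mp hd)
  -- Agreement between Dm and the dotted truncated tableau
  set Q : ℤ → Prop := fun x => x < a₁ ∨ b₁ < x with hQ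
  set E0 := addDots C' (toDotted T0') with hE0
  have agree0 : Agree Q Dm E0 := by
    intro α
    by_cases hc : α ∈ C'
    · left
      rw [hE0]
      unfold addDots
      rw [if_pos hc, (hC' α).mp hc]
    · have hE0α : E0 α = (T0' α).map Sum.inl := by
        rw [hE0]; unfold addDots toDotted; rw [if_neg hc]
      cases hDα : Dm α with
      | none =>
        left
        have hα : α ∉ S := (gm.supp α).mp hDα
        have hT0α : T0 α = none := by
          cases hT : T0 α with
          | none => rfl
          | some x => exact absurd ((memS α).mpr (Or.inl (by simp [hT]))) hα
        have : T0' α = none := by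
          rw [hT0']
          unfold restrictVals
          rw [hT0α]; rfl
        rw [hE0α, this]; rfl
      | some w =>
        cases w with
        | inr u =>
          exact absurd ((hC' α).mpr hDα) hc
        | inl x =>
          by_cases hxa : a₁ ≤ x
          · have hT0α : T0 α = some x := gm.big2 α x hDα (by omega)
            by_cases hxb : x ≤ b₁
            · left
              rw [hE0α, (hT0's α x).mpr ⟨hT0α, hxa, hxb⟩]; rfl
            · right
              have : T0' α = none := by
                rw [restrictVals_none_iff]
                intro y hy hw
                rw [hT0α] at hy; injection hy with hy; omega
              rw [hE0α, this]
              exact ⟨rfl, x, rfl, Or.inr (by omega)⟩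
          · right
            have : T0' α = none := by
              rw [restrictVals_none_iff]
              intro y hy hw
              have := gm.big α y hy (by omega)
              rw [hDα] at this
              injection this with this
              have : x = y := by simpa [iv] using this
              omega
            rw [hE0α, this]
            exact ⟨rfl, x, rfl, Or.inl (by omega)⟩
  set E' := swapUp a₁ n' E0 with hE'
  have agreeEnd : Agree Q (swapUp a₁ n' Dm) E' := by
    refine Agree.swapUpChunk a₁ n' ?_ agree0
    intro i hi
    intro h
    have h' : (a₁ + (i : ℤ)) < a₁ ∨ b₁ < a₁ + (i : ℤ) := h
    omega
  -- Good for the truncated run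
  have gtr : Good S' T0' (a₁ - 1 + n') E' := good_swapUp st' n'
  -- decompose the full run
  have hsplit : swapUp A N base = swapUp (b₁ + 1) rest (swapUp a₁ n' Dm) := by
    rw [hNeq, swapUp_add A (m + n') rest base, swapUp_add A m n' base]
    rw [show A + (m : ℤ) = a₁ by omega, show A + ((m + n' : ℕ) : ℤ) = b₁ + 1 by push_cast; omega]
  -- final equality
  funext α
  apply option_ext'
  intro x
  rw [restrictVals_some_iff, restrictInt_some_iff, restrictInt_some_iff, hsplit]
  constructor
  · rintro ⟨hDN, hax, hxb⟩
    have hstable : swapUp a₁ n' Dm α = some (iv x) := by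
      rw [← swapUp_iv_stable (b₁ + 1) rest _ x (fun i hi => by omega) α]
      exact hDN
    rcases agreeEnd α with he | ⟨hn, y, hy, hQy⟩
    · rw [he, hstable]
    · rw [hy] at hstable
      injection hstable with hh
      have : y = x := by simpa [iv] using hh
      have hQy' : y < a₁ ∨ b₁ < y := hQy
      omega
  · intro hEx
    have hwin : a₁ ≤ x ∧ x ≤ b₁ := by
      obtain ⟨β, hβ⟩ := gtr.vals α x hEx
      obtain ⟨_, h1, h2⟩ := (hT0's β x).mp hβ
      exact ⟨h1, h2⟩
    have hstable : swapUp a₁ n' Dm α = some (iv x) := by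
      rcases agreeEnd α with he | ⟨hn, y, hy, hQy⟩
      · rw [← he, hEx]
      · rw [hn] at hEx; exact absurd hEx (by simp)
    refine ⟨?_, hwin.1, hwin.2⟩
    rw [swapUp_iv_stable (b₁ + 1) rest _ x (fun i hi => by omega) α]
    exact hstable

def dzd (T : L → Option ZDot) : Lᵒᵈ → Option ZDot := fun α =>
  (T (OrderDual.ofDual α)).map (Sum.map (fun x => -x) id)

def dz (T : L → Option ℤ) : Lᵒᵈ → Option ℤ := fun α =>
  (T (OrderDual.ofDual α)).map (fun x => -x)

lemma dz_some (T : L → Option ℤ) (α : Lᵒᵈ) (x : ℤ) :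
    dz T α = some x ↔ T (OrderDual.ofDual α) = some (-x) := by
  simp only [dz]
  cases hT : T (OrderDual.ofDual α) with
  | none => simp
  | some y => simp; omega

lemma dzd_iv (T : L → Option ZDot) (α : Lᵒᵈ) (x : ℤ) :
    dzd T α = some (iv x) ↔ T (OrderDual.ofDual α) = some (iv (-x)) := by
  simp only [dzd]
  cases hT : T (OrderDual.ofDual α) with
  | none => simp
  | some w => cases w with
    | inl y => simp [iv]; omega
    | inr u => simp [iv]

lemma dzd_dot (T : L → Option ZDot) (α : Lᵒᵈ) :
    dzd T α = some dotv ↔ T (OrderDual.ofDual α) = some dotv := by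
  simp only [dzd]
  cases hT : T (OrderDual.ofDual α) with
  | none => simp
  | some w => cases w with
    | inl y => simp [dotv]
    | inr u => simp [dotv]

lemma Neighbor_ofDual (α β : Lᵒᵈ) :
    Neighbor α β ↔ Neighbor (OrderDual.ofDual α) (OrderDual.ofDual β) := by
  unfold Neighbor
  rw [ofDual_covBy_ofDual_iff, ofDual_covBy_ofDual_iff]
  exact or_comm

lemma hasNbr_dzd_iv (T : L → Option ZDot) (α : Lᵒᵈ) (v : ℤ) :
    hasNbr (dzd T) (iv v) α ↔ hasNbr T (iv (-v)) (OrderDual.ofDual α) := by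
  constructor
  · rintro ⟨β, hn, hb⟩
    exact ⟨OrderDual.ofDual β, (Neighbor_ofDual α β).mp hn, (dzd_iv T β v).mp hb⟩
  · rintro ⟨β, hn, hb⟩
    refine ⟨OrderDual.toDual β, (Neighbor_ofDual α (OrderDual.toDual β)).mpr hn, ?_⟩
    rw [dzd_iv]; exact hb

lemma hasNbr_dzd_dot (T : L → Option ZDot) (α : Lᵒᵈ) :
    hasNbr (dzd T) dotv α ↔ hasNbr T dotv (OrderDual.ofDual α) := by
  constructor
  · rintro ⟨β, hn, hb⟩
    exact ⟨OrderDual.ofDual β, (Neighbor_ofDual α β).mp hn, (dzd_dot T β).mp hb⟩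
  · rintro ⟨β, hn, hb⟩
    refine ⟨OrderDual.toDual β, (Neighbor_ofDual α (OrderDual.toDual β)).mpr hn, ?_⟩
    rw [dzd_dot]; exact hb

lemma swapVal_dual (v : ℤ) (T : L → Option ZDot) :
    swapVal (iv v) dotv (dzd T) = dzd (swapVal (iv (-v)) dotv T) := by
  funext α
  apply option_ext'
  intro w
  cases w with
  | inr u =>
    cases u
    rw [show (Sum.inr () : ZDot) = dotv from rfl]
    rw [swap_eq_dot_iff v (dzd T) α, dzd_dot (swapVal (iv (-v)) dotv T) α,
      swap_eq_dot_iff (-v) T (OrderDual.ofDual α), dzd_iv T α v, dzd_dot T α,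
      hasNbr_dzd_iv, hasNbr_dzd_dot]
  | inl x =>
    rw [show (Sum.inl x : ZDot) = iv x from rfl]
    rw [swap_eq_iv_iff v x (dzd T) α, dzd_iv (swapVal (iv (-v)) dotv T) α x,
      swap_eq_iv_iff (-v) (-x) T (OrderDual.ofDual α), dzd_iv T α v, dzd_iv T α x,
      dzd_dot T α, hasNbr_dzd_iv, hasNbr_dzd_dot, neg_inj]

lemma swapUp_dual (a : ℤ) (n : ℕ) (T : L → Option ZDot) :
    swapUp a n (dzd T) = dzd (swapDown (-a) n T) := by
  induction n with
  | zero => rfl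
  | succ n ih =>
    show swapVal (iv (a + (n : ℤ))) dotv (swapUp a n (dzd T)) = _
    rw [ih, swapVal_dual]
    show dzd (swapVal (iv (-(a + (n : ℤ)))) dotv (swapDown (-a) n T)) =
      dzd (swapVal (iv (-a - (n : ℤ))) dotv (swapDown (-a) n T))
    congr 2
    ring

lemma addDots_dual (C : Finset L) (T : L → Option ZDot) :
    addDots (C.map (OrderDual.toDual (α := L)).toEmbedding) (dzd T) = dzd (addDots C T) := by
  funext α
  have hmem : α ∈ C.map (OrderDual.toDual (α := L)).toEmbedding ↔ OrderDual.ofDual α ∈ C :=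
    Finset.mem_map_equiv
  simp only [addDots, dzd]
  by_cases hc : OrderDual.ofDual α ∈ C
  · rw [if_pos (hmem.mpr hc), if_pos hc]; rfl
  · rw [if_neg (fun h => hc (hmem.mp h)), if_neg hc]

lemma toDotted_dz (T : L → Option ℤ) : toDotted (dz T) = dzd (toDotted T) := by
  funext α
  simp only [toDotted, dz, dzd]
  cases T (OrderDual.ofDual α) <;> rfl

lemma restrictInt_dzd (D : L → Option ZDot) : restrictInt (dzd D) = dz (restrictInt D) := by
  funext α
  simp only [restrictInt, dzd, dz]
  cases D (OrderDual.ofDual α) with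
  | none => rfl
  | some w => cases w <;> rfl

lemma restrictVals_dz (T : L → Option ℤ) (a b : ℤ) :
    restrictVals (dz T) a b = dz (restrictVals T (-b) (-a)) := by
  funext α
  simp only [restrictVals, dz]
  cases hT : T (OrderDual.ofDual α) with
  | none => rfl
  | some y =>
    simp only [Option.map_some, Option.bind_some]
    split_ifs with h1 h2 h2
    · rfl
    · omega
    · omega
    · rfl

lemma dz_inj {T1 T2 : L → Option ℤ} (h : dz T1 = dz T2) : T1 = T2 := by
  funext α
  have h2 := congrFun h (OrderDual.toDual α)
  simp only [dz] at h2
  exact Option.map_injective neg_injective h2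

lemma Increasing_dz {T : L → Option ℤ} (h : Increasing T) : Increasing (dz T) := by
  intro α β hab x y hx hy
  rw [dz_some] at hx hy
  have := h (OrderDual.ofDual β) (OrderDual.ofDual α) hab (-y) (-x) hy hx
  omega

def cutLe (nu : Finset L) (T : L → Option ℤ) (t : ℤ) : Finset L :=
  nu.filter fun α => ∃ x, T α = some x ∧ x ≤ t

lemma mem_cutLe {nu : Finset L} {T : L → Option ℤ} {t : ℤ} {α : L} :
    α ∈ cutLe nu T t ↔ α ∈ nu ∧ ∃ x, T α = some x ∧ x ≤ t := Finset.mem_filter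

section Shapes

variable {lam nu : Finset L} {T : L → Option ℤ}

lemma shape_mem (hshape : shapeOf T = (nu : Set L) \ (lam : Set L)) {α : L} {x : ℤ}
    (h : T α = some x) : α ∈ nu ∧ α ∉ lam := by
  have : α ∈ shapeOf T := by simp [shapeOf, h]
  rw [hshape] at this
  exact ⟨this.1, this.2⟩

lemma shape_mem' (hshape : shapeOf T = (nu : Set L) \ (lam : Set L)) {α : L}
    (h1 : α ∈ nu) (h2 : α ∉ lam) : ∃ x, T α = some x := by
  have : α ∈ shapeOf T := by rw [hshape]; exact ⟨h1, h2⟩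
  simp only [shapeOf, Set.mem_setOf_eq] at this
  cases hT : T α with
  | none => exact absurd hT this
  | some x => exact ⟨x, rfl⟩

lemma straight_cut (hskew : IsSkewPair lam nu)
    (hshape : shapeOf T = (nu : Set L) \ (lam : Set L)) (hinc : Increasing T) (t : ℤ) :
    StraightShape (lam ∪ cutLe nu T t) := by
  intro α hα β hβα
  rw [Finset.mem_union] at hα ⊢
  rcases hα with hα | hα
  · exact Or.inl (hskew.1 α hα β hβα)
  · rw [mem_cutLe] at hα
    obtain ⟨hnu, x, hx, hxt⟩ := hα
    have hβnu : β ∈ nu := hskew.2.1 α hnu β hβα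
    by_cases hβlam : β ∈ lam
    · exact Or.inl hβlam
    · obtain ⟨y, hy⟩ := shape_mem' hshape hβnu hβlam
      rcases eq_or_lt_of_le hβα with rfl | hlt
      · exact Or.inr (mem_cutLe.mpr ⟨hnu, x, hx, hxt⟩)
      · have := hinc β α hlt y x hy hx
        exact Or.inr (mem_cutLe.mpr ⟨hβnu, y, hy, by omega⟩)

lemma shape_restrict (hshape : shapeOf T = (nu : Set L) \ (lam : Set L)) {a b : ℤ} :
    shapeOf (restrictVals T a b)
      = ((lam ∪ cutLe nu T b : Finset L) : Set L) \ ((lam ∪ cutLe nu T (a - 1) : Finset L) : Set L) := by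
  ext α
  simp only [shapeOf, Set.mem_setOf_eq, Set.mem_diff, Finset.coe_union, Set.mem_union,
    Finset.mem_coe, mem_cutLe]
  constructor
  · intro h
    obtain ⟨x, hx⟩ : ∃ x, restrictVals T a b α = some x := by
      cases hR : restrictVals T a b α with
      | none => exact absurd hR h
      | some x => exact ⟨x, rfl⟩
    rw [restrictVals_some_iff] at hx
    obtain ⟨hT, hax, hxb⟩ := hx
    obtain ⟨hnu, hlam⟩ := shape_mem hshape hT
    refine ⟨Or.inr ⟨hnu, x, hT, hxb⟩, ?_⟩
    rintro (h | ⟨_, y, hy, hyt⟩)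
    · exact hlam h
    · rw [hT] at hy; injection hy with hy; omega
  · rintro ⟨h1, h2⟩
    rcases h1 with h1 | ⟨hnu, x, hx, hxb⟩
    · exact absurd (Or.inl h1) h2
    · have hlam : α ∉ lam := fun hl => h2 (Or.inl hl)
      have hax : a ≤ x := by
        by_contra hax
        exact h2 (Or.inr ⟨hnu, x, hx, by omega⟩)
      rw [(restrictVals_some_iff T a b α x).mpr ⟨hx, hax, hxb⟩]
      simp

lemma inc_restrict (hinc : Increasing T) (a b : ℤ) : Increasing (restrictVals T a b) := by
  intro α β h x y hx hy
  rw [restrictVals_some_iff] at hx hy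
  exact hinc α β h x y hx.1 hy.1

lemma restrictVals_empty (a b : ℤ) (h : ∀ α x, T α = some x → ¬ (a ≤ x ∧ x ≤ b)) :
    restrictVals T a b = fun _ => none := by
  funext α
  rw [restrictVals_none_iff]
  exact fun x hx => h α x hx

lemma restrict_skew (h : IncreasingSkewTableau T) (a b : ℤ) :
    IncreasingSkewTableau (restrictVals T a b) := by
  obtain ⟨⟨lam, nu, hskew, hshape⟩, hinc⟩ := h
  refine ⟨?_, inc_restrict hinc a b⟩
  by_cases hab : a ≤ b
  · refine ⟨lam ∪ cutLe nu T (a - 1), lam ∪ cutLe nu T b,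
      ⟨straight_cut hskew hshape hinc _, straight_cut hskew hshape hinc _, ?_⟩,
      shape_restrict hshape⟩
    intro α hα
    rw [Finset.mem_union] at hα ⊢
    rcases hα with hα | hα
    · exact Or.inl hα
    · rw [mem_cutLe] at hα
      obtain ⟨hnu, x, hx, hxt⟩ := hα
      exact Or.inr (mem_cutLe.mpr ⟨hnu, x, hx, by omega⟩)
  · refine ⟨nu, nu, ⟨hskew.2.1, hskew.2.1, le_refl _⟩, ?_⟩
    rw [restrictVals_empty a b (fun α x _ h => hab (le_trans h.1 h.2))]
    simp [shapeOf]

end Shapes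

lemma setting_forward {lam nu C : Finset L} {T : L → Option ℤ} {A B : ℤ}
    (hinc : Increasing T)
    (hskew : IsSkewPair lam nu) (hshape : shapeOf T = (nu : Set L) \ (lam : Set L))
    (hvals : ValuesIn T A B) (hmax : ∀ c ∈ C, c ∈ lam ∧ ∀ d ∈ lam, ¬ c < d) :
    Setting ({α | T α ≠ none} ∪ ↑C) T C A := by
  have hshapes : {α : L | T α ≠ none} = (nu : Set L) \ (lam : Set L) := hshape
  have hCnone : ∀ c ∈ C, T c = none := by
    intro c hc
    cases hT : T c with
    | none => rfl
    | some x => exact absurd (shape_mem hshape hT).2 (fun h => h ((hmax c hc).1))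
  constructor
  · rfl
  · apply Set.Finite.union
    · rw [hshapes]
      exact Set.Finite.subset nu.finite_toSet (fun α h => h.1)
    · exact C.finite_toSet
  · -- convexity
    intro α β z hα hβ h1 h2
    have hmemnu : ∀ γ : L, γ ∈ ({α | T α ≠ none} ∪ ↑C : Set L) → γ ∈ nu := by
      intro γ hγ
      rcases hγ with hγ | hγ
      · rw [hshapes] at hγ; exact hγ.1
      · exact hskew.2.2 ((hmax γ hγ).1)
    have hznu : z ∈ nu := hskew.2.1 β (hmemnu β hβ) z (le_of_lt h2)
    by_cases hzC : z ∈ C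
    · exact Or.inr hzC
    · by_cases hzlam : z ∈ lam
      · exfalso
        rcases hα with hα | hα
        · rw [hshapes] at hα
          exact hα.2 (hskew.1 z hzlam α (le_of_lt h1))
        · exact (hmax α hα).2 z hzlam h1
      · left
        rw [hshapes]
        exact ⟨hznu, hzlam⟩
  · exact hinc
  · exact hCnone
  · exact fun α x h => (hvals α x h).1
  · intro α c hα hc hlt
    cases hT : T α with
    | none => exact hα hT
    | some x =>
      exact (shape_mem hshape hT).2 (hskew.1 c (hmax c hc).1 α (le_of_lt hlt))
  · exact fun c hc d hd => (hmax c hc).2 d (hmax d hd).1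

lemma step_forward {T T' : L → Option ℤ} (hinc : Increasing T)
    (hs : IsForwardSlide T T') (a b : ℤ) :
    (IsForwardSlide (restrictVals T a b) (restrictVals T' a b) ∨
      restrictVals T a b = restrictVals T' a b) ∧ Increasing T' := by
  obtain ⟨lam, nu, C, A, B, hskew, hshape, hvals, hmax, heq⟩ := hs
  have st := setting_forward hinc hskew hshape hvals hmax
  have hup : ∀ α x, T α = some x → x ≤ B := fun α x h => (hvals α x h).2
  have hTinc' : Increasing T' ∧ ValuesIn T' A B := by
    rw [heq]; exact slide_inc st hup
  refine ⟨?_, hTinc'.1⟩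
  set a₁ := max a A with ha₁
  set b₁ := min b B with hb₁
  by_cases hw : a₁ ≤ b₁
  · -- nonempty window
    left
    obtain ⟨C', f1, f2, heq2⟩ :=
      mega st hup a₁ b₁ (le_max_right a A) hw (min_le_right b B)
    have hcongrT : restrictVals T a b = restrictVals T a₁ b₁ :=
      restrictVals_congr (fun α x h => by have := hvals α x h; omega)
    have hcongrT' : restrictVals T' a b = restrictVals T' a₁ b₁ :=
      restrictVals_congr (fun α x h => by have := hTinc'.2 α x h; omega)
    refine ⟨lam ∪ cutLe nu T (a₁ - 1), lam ∪ cutLe nu T b₁, C', a₁, b₁,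
      ⟨straight_cut hskew hshape hinc _, straight_cut hskew hshape hinc _, ?_⟩,
      ?_, ?_, ?_, ?_⟩
    · intro α hα
      rw [Finset.mem_union] at hα ⊢
      rcases hα with hα | hα
      · exact Or.inl hα
      · rw [mem_cutLe] at hα
        obtain ⟨hnu, x, hx, hxt⟩ := hα
        exact Or.inr (mem_cutLe.mpr ⟨hnu, x, hx, by omega⟩)
    · rw [hcongrT]
      exact shape_restrict hshape
    · intro α x h
      rw [hcongrT, restrictVals_some_iff] at h
      exact ⟨h.2.1, h.2.2⟩
    · -- C' conditions
      intro c hc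
      constructor
      · rcases f1 c hc with h | ⟨x, hx, hxa⟩
        · exact Finset.mem_union_left _ (hmax c h).1
        · exact Finset.mem_union_right _
            (mem_cutLe.mpr ⟨(shape_mem hshape hx).1, x, hx, by omega⟩)
      · intro d hd
        rw [Finset.mem_union] at hd
        rcases hd with hd | hd
        · rcases f1 c hc with h | ⟨x, hx, hxa⟩
          · exact (hmax c h).2 d hd
          · intro hlt
            exact (shape_mem hshape hx).2 (hskew.1 d hd c (le_of_lt hlt))
        · rw [mem_cutLe] at hd
          obtain ⟨hnu, y, hy, hyt⟩ := hd
          exact f2 c hc d (Or.inr ⟨y, hy, by omega⟩)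
    · rw [hcongrT, hcongrT', ← heq2, heq]
  · -- empty window
    right
    have h1 : restrictVals T a b = fun _ => none :=
      restrictVals_empty a b (fun α x h hc => by have := hvals α x h; omega)
    have h2 : restrictVals T' a b = fun _ => none :=
      restrictVals_empty a b (fun α x h hc => by have := hTinc'.2 α x h; omega)
    rw [h1, h2]

lemma dz_none (T : L → Option ℤ) (α : Lᵒᵈ) :
    dz T α = none ↔ T (OrderDual.ofDual α) = none := by
  simp only [dz]
  cases T (OrderDual.ofDual α) <;> simp

lemma dz_some' (T : L → Option ℤ) (α : L) (x : ℤ) :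
    dz T (OrderDual.toDual α) = some x ↔ T α = some (-x) :=
  dz_some T (OrderDual.toDual α) x

lemma Increasing_undz {T : L → Option ℤ} (h : Increasing (dz T)) : Increasing T := by
  intro α β hab x y hx hy
  have h1 : dz T (OrderDual.toDual β) = some (-y) := by
    rw [dz_some']; rw [neg_neg]; exact hy
  have h2 : dz T (OrderDual.toDual α) = some (-x) := by
    rw [dz_some']; rw [neg_neg]; exact hx
  have := h (OrderDual.toDual β) (OrderDual.toDual α) hab (-y) (-x) h1 h2
  omega

lemma step_reverse {T T' : L → Option ℤ} (hinc : Increasing T)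
    (hs : IsReverseSlide T T') (a b : ℤ) :
    (IsReverseSlide (restrictVals T a b) (restrictVals T' a b) ∨
      restrictVals T a b = restrictVals T' a b) ∧ Increasing T' := by
  obtain ⟨lam, nu, C, A, B, hskew, hshape, hvals, hmin, heq⟩ := hs
  set Th : Lᵒᵈ → Option ℤ := dz T with hTh
  set Ch : Finset Lᵒᵈ := C.map (OrderDual.toDual (α := L)).toEmbedding with hCh
  have hChmem : ∀ α : Lᵒᵈ, α ∈ Ch ↔ OrderDual.ofDual α ∈ C := fun α => Finset.mem_map_equiv
  have hCnu : ∀ c ∈ C, c ∉ nu := fun c hc => (hmin c hc).1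
  have hCnone : ∀ c ∈ C, T c = none := by
    intro c hc
    cases hT : T c with
    | none => rfl
    | some x => exact absurd (shape_mem hshape hT).1 (hCnu c hc)
  have hlamnu : (lam : Set L) ⊆ (nu : Set L) := fun γ h => hskew.2.2 h
  -- Setting over the order dual
  have st : Setting ({α : Lᵒᵈ | Th α ≠ none} ∪ ↑Ch) Th Ch (-B) := by
    constructor
    · rfl
    · apply Set.Finite.union
      · have hsub : {α : Lᵒᵈ | Th α ≠ none} ⊆
            (fun α : Lᵒᵈ => OrderDual.ofDual α) ⁻¹' ((nu : Set L) \ (lam : Set L)) := by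
          intro α h
          simp only [Set.mem_setOf_eq] at h
          have hne : T (OrderDual.ofDual α) ≠ none := fun hn => h ((dz_none T α).mpr hn)
          cases hT : T (OrderDual.ofDual α) with
          | none => exact absurd hT hne
          | some x =>
            have := shape_mem hshape hT
            exact ⟨this.1, this.2⟩
        apply Set.Finite.subset _ hsub
        apply Set.Finite.preimage
        · exact (OrderDual.ofDual (α := L)).injective.injOn
        · exact Set.Finite.subset nu.finite_toSet (fun γ h => h.1)
      · exact Ch.finite_toSet
    · -- convexity
      intro α β z hα hβ h1 h2
      have h1' : OrderDual.ofDual z < OrderDual.ofDual α := h1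
      have h2' : OrderDual.ofDual β < OrderDual.ofDual z := h2
      have hmem : ∀ γ : Lᵒᵈ, γ ∈ ({α : Lᵒᵈ | Th α ≠ none} ∪ ↑Ch : Set Lᵒᵈ) →
          (T (OrderDual.ofDual γ) ≠ none ∨ OrderDual.ofDual γ ∈ C) := by
        intro γ hγ
        rcases hγ with hγ | hγ
        · exact Or.inl (fun hn => hγ ((dz_none T γ).mpr hn))
        · exact Or.inr ((hChmem γ).mp hγ)
      have hmemnu : ∀ γ : Lᵒᵈ, T (OrderDual.ofDual γ) ≠ none → OrderDual.ofDual γ ∈ nu := by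
        intro γ h
        cases hT : T (OrderDual.ofDual γ) with
        | none => exact absurd hT h
        | some x => exact (shape_mem hshape hT).1
      by_cases hzC : OrderDual.ofDual z ∈ C
      · exact Or.inr ((hChmem z).mpr hzC)
      · left
        simp only [Set.mem_setOf_eq]
        intro hzn
        rw [dz_none] at hzn
        by_cases hznu : OrderDual.ofDual z ∈ nu
        · -- z' must be in lam, derive contradiction from β
          have hzlam : OrderDual.ofDual z ∈ lam := by
            by_contra hzlam
            obtain ⟨x, hx⟩ := shape_mem' hshape hznu hzlam
            rw [hx] at hzn; exact absurd hzn (by simp)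
          rcases hmem β hβ with hβ' | hβ'
          · cases hT : T (OrderDual.ofDual β) with
            | none => exact hβ' hT
            | some x =>
              exact (shape_mem hshape hT).2
                (hskew.1 _ hzlam _ (le_of_lt h2'))
          · exact hCnu _ hβ' (hskew.2.2 (hskew.1 _ hzlam _ (le_of_lt h2')))
        · -- z' not in nu, derive contradiction from α
          rcases hmem α hα with hα' | hα'
          · exact hznu (hskew.2.1 _ (hmemnu α hα') _ (le_of_lt h1'))
          · exact (hmin _ hα').2 _ hznu h1'
    · exact Increasing_dz hinc
    · intro c hc
      rw [dz_none]
      exact hCnone _ ((hChmem c).mp hc)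
    · intro α x h
      rw [dz_some] at h
      have := hvals _ _ h
      omega
    · intro α c hα hc hlt
      have hlt' : OrderDual.ofDual c < OrderDual.ofDual α := hlt
      have hαnu : OrderDual.ofDual α ∈ nu := by
        cases hT : T (OrderDual.ofDual α) with
        | none => exact absurd ((dz_none T α).mpr hT) hα
        | some x => exact (shape_mem hshape hT).1
      exact hCnu _ ((hChmem c).mp hc) (hskew.2.1 _ hαnu _ (le_of_lt hlt'))
    · intro c hc d hd hlt
      have hlt' : OrderDual.ofDual d < OrderDual.ofDual c := hlt
      exact (hmin _ ((hChmem c).mp hc)).2 _ (hCnu _ ((hChmem d).mp hd)) hlt'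
  have hup : ∀ (α : Lᵒᵈ) (x : ℤ), Th α = some x → x ≤ -A := by
    intro α x h
    rw [dz_some] at h
    have := hvals _ _ h
    omega
  -- the key dualized equation
  have hNe : (-A) - (-B) + 1 = B - A + 1 := by ring
  have hkey : dz T' = restrictInt (swapUp (-B) ((-A) - (-B) + 1).toNat
      (addDots Ch (toDotted Th))) := by
    rw [hNe, hTh, hCh, toDotted_dz, addDots_dual, swapUp_dual, neg_neg, restrictInt_dzd, heq]
  have hTinc' : Increasing T' ∧ ValuesIn T' A B := by
    have h2 := slide_inc (B := -A) st hup
    rw [← hkey] at h2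
    refine ⟨Increasing_undz h2.1, ?_⟩
    intro α x h
    have : dz T' (OrderDual.toDual α) = some (-x) := by
      rw [dz_some']; rw [neg_neg]; exact h
    have := h2.2 _ _ this
    omega
  refine ⟨?_, hTinc'.1⟩
  set a₁ := max a A with ha₁
  set b₁ := min b B with hb₁
  by_cases hw : a₁ ≤ b₁
  · left
    have haA : A ≤ a₁ := le_max_right a A
    have hbB : b₁ ≤ B := min_le_right b B
    obtain ⟨Ch', f1, f2, heq2⟩ :=
      mega st hup (-b₁) (-a₁) (by omega) (by omega) (by omega)
    set C'' : Finset L := Ch'.map (OrderDual.ofDual (α := L)).toEmbedding with hC''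
    have hC''mem : ∀ γ : L, γ ∈ C'' ↔ OrderDual.toDual γ ∈ Ch' := fun γ => Finset.mem_map_equiv
    have hChC'' : Ch' = C''.map (OrderDual.toDual (α := L)).toEmbedding := by
      ext α
      rw [Finset.mem_map_equiv]
      exact ((hC''mem (OrderDual.ofDual α))).symm
    -- rewrite heq2 into an equation over L
    have hcongrT : restrictVals T a b = restrictVals T a₁ b₁ :=
      restrictVals_congr (fun α x h => by have := hvals α x h; omega)
    have hcongrT' : restrictVals T' a b = restrictVals T' a₁ b₁ :=
      restrictVals_congr (fun α x h => by have := hTinc'.2 α x h; omega)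
    have hrw1 : restrictVals Th (-b₁) (-a₁) = dz (restrictVals T a₁ b₁) := by
      rw [hTh, restrictVals_dz, neg_neg, neg_neg]
    have hrw0 : restrictVals (dz T') (-b₁) (-a₁) = dz (restrictVals T' a₁ b₁) := by
      rw [restrictVals_dz, neg_neg, neg_neg]
    have hNn : ((-a₁) - (-b₁) + 1) = b₁ - a₁ + 1 := by ring
    have heq3 : dz (restrictVals T' a₁ b₁) =
        dz (restrictInt (swapDown b₁ (b₁ - a₁ + 1).toNat
          (addDots C'' (toDotted (restrictVals T a₁ b₁))))) := by
      rw [← hrw0]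
      calc restrictVals (dz T') (-b₁) (-a₁)
          = restrictVals (restrictInt (swapUp (-B) ((-A) - (-B) + 1).toNat
              (addDots Ch (toDotted Th)))) (-b₁) (-a₁) := by rw [← hkey]
        _ = restrictInt (swapUp (-b₁) ((-a₁) - (-b₁) + 1).toNat
              (addDots Ch' (toDotted (restrictVals Th (-b₁) (-a₁))))) := heq2
        _ = dz (restrictInt (swapDown b₁ (b₁ - a₁ + 1).toNat
              (addDots C'' (toDotted (restrictVals T a₁ b₁))))) := by
              rw [hNn, hrw1, hChC'', toDotted_dz, addDots_dual, swapUp_dual, neg_neg,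
                restrictInt_dzd]
    have heqL : restrictVals T' a₁ b₁ =
        restrictInt (swapDown b₁ (b₁ - a₁ + 1).toNat
          (addDots C'' (toDotted (restrictVals T a₁ b₁)))) := dz_inj heq3
    -- translated dot facts
    have f1' : ∀ c ∈ C'', (c ∈ C ∨ ∃ x, T c = some x ∧ b₁ < x) := by
      intro c hc
      rcases f1 (OrderDual.toDual c) ((hC''mem c).mp hc) with h | ⟨x, hx, hxa⟩
      · exact Or.inl ((hChmem _).mp h)
      · rw [dz_some'] at hx
        exact Or.inr ⟨-x, hx, by omega⟩
    have f2' : ∀ c ∈ C'', ∀ d : L,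
        (d ∈ C ∨ ∃ x, T d = some x ∧ b₁ < x) → ¬ d < c := by
      intro c hc d hd hlt
      refine f2 (OrderDual.toDual c) ((hC''mem c).mp hc) (OrderDual.toDual d) ?_ hlt
      rcases hd with h | ⟨x, hx, hxb⟩
      · exact Or.inl ((hChmem _).mpr h)
      · refine Or.inr ⟨-x, ?_, by omega⟩
        rw [dz_some', neg_neg]
        exact hx
    refine ⟨lam ∪ cutLe nu T (a₁ - 1), lam ∪ cutLe nu T b₁, C'', a₁, b₁,
      ⟨straight_cut hskew hshape hinc _, straight_cut hskew hshape hinc _, ?_⟩,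
      ?_, ?_, ?_, ?_⟩
    · intro α hα
      rw [Finset.mem_union] at hα ⊢
      rcases hα with hα | hα
      · exact Or.inl hα
      · rw [mem_cutLe] at hα
        obtain ⟨hnu, x, hx, hxt⟩ := hα
        exact Or.inr (mem_cutLe.mpr ⟨hnu, x, hx, by omega⟩)
    · rw [hcongrT]
      exact shape_restrict hshape
    · intro α x h
      rw [hcongrT, restrictVals_some_iff] at h
      exact ⟨h.2.1, h.2.2⟩
    · -- C'' conditions for the reverse slide
      intro c hc
      have hnu2sub : ∀ γ : L, γ ∈ lam ∪ cutLe nu T b₁ → γ ∈ nu := by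
        intro γ h
        rw [Finset.mem_union] at h
        rcases h with h | h
        · exact hskew.2.2 h
        · exact (mem_cutLe.mp h).1
      constructor
      · intro hcmem
        rcases f1' c hc with h | ⟨x, hx, hxb⟩
        · exact hCnu c h (hnu2sub c hcmem)
        · rw [Finset.mem_union] at hcmem
          rcases hcmem with h | h
          · exact (shape_mem hshape hx).2 h
          · obtain ⟨_, y, hy, hyb⟩ := mem_cutLe.mp h
            rw [hx] at hy; injection hy with hy; omega
      · intro d hd hlt
        by_cases hdnu : d ∈ nu
        · have hdlam : d ∉ lam := fun h => hd (Finset.mem_union_left _ h)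
          obtain ⟨y, hy⟩ := shape_mem' hshape hdnu hdlam
          have hyb : b₁ < y := by
            by_contra hyb
            exact hd (Finset.mem_union_right _ (mem_cutLe.mpr ⟨hdnu, y, hy, by omega⟩))
          exact f2' c hc d (Or.inr ⟨y, hy, hyb⟩) hlt
        · rcases f1' c hc with h | ⟨x, hx, hxb⟩
          · exact (hmin c h).2 d hdnu hlt
          · exact hdnu (hskew.2.1 _ (shape_mem hshape hx).1 _ (le_of_lt hlt))
    · rw [hcongrT, hcongrT', heqL]
  · right
    have h1 : restrictVals T a b = fun _ => none :=
      restrictVals_empty a b (fun α x h hc => by have := hvals α x h; omega)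
    have h2 : restrictVals T' a b = fun _ => none :=
      restrictVals_empty a b (fun α x h hc => by have := hTinc'.2 α x h; omega)
    rw [h1, h2]

lemma step_main {T T' : L → Option ℤ} (hinc : Increasing T)
    (h : IsForwardSlide T T' ∨ IsReverseSlide T T') (a b : ℤ) :
    JdtEquiv (restrictVals T a b) (restrictVals T' a b) ∧ Increasing T' := by
  rcases h with h | h
  · obtain ⟨h1, h2⟩ := step_forward hinc h a b
    refine ⟨?_, h2⟩
    rcases h1 with hs | he
    · exact Relation.ReflTransGen.single (Or.inl hs)
    · rw [JdtEquiv, he]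
  · obtain ⟨h1, h2⟩ := step_reverse hinc h a b
    refine ⟨?_, h2⟩
    rcases h1 with hs | he
    · exact Relation.ReflTransGen.single (Or.inr hs)
    · rw [JdtEquiv, he]

lemma chain_main {T T' : L → Option ℤ} (h : JdtEquiv T T') (hinc : Increasing T) (a b : ℤ) :
    JdtEquiv (restrictVals T a b) (restrictVals T' a b) ∧ Increasing T' := by
  have h' : Relation.ReflTransGen (fun A B => IsForwardSlide A B ∨ IsReverseSlide A B) T T' := h
  clear h
  induction h' with
  | refl => exact ⟨Relation.ReflTransGen.refl, hinc⟩
  | tail hst hlast ih =>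
    obtain ⟨ih1, ih2⟩ := ih
    obtain ⟨s1, s2⟩ := step_main ih2 hlast a b
    exact ⟨Relation.ReflTransGen.trans ih1 s1, s2⟩

end Jdt

theorem restriction_of_jdt_equivalent_tableaux {L : Type} [PartialOrder L]
    (hmin : {x : L | ∀ y : L, ¬ y < x}.Finite)
    (hcov : ∀ x : L, {y : L | x ⋖ y}.Finite)
    (T T' : L → Option ℤ)
    (hT : IncreasingSkewTableau T) (hT' : IncreasingSkewTableau T')
    (h : JdtEquiv T T') (a b : ℤ) :
    IncreasingSkewTableau (restrictVals T a b) ∧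
    IncreasingSkewTableau (restrictVals T' a b) ∧
    JdtEquiv (restrictVals T a b) (restrictVals T' a b) := by
  exact ⟨Jdt.restrict_skew hT a b, Jdt.restrict_skew hT' a b, (Jdt.chain_main h hT.2 a b).1⟩
end
end

section
/- Let Λ be a partially ordered set as in the context and let U be a unique rectification target. Then U is the only tableau of straight shape in its jeu de taquin class [U], i.e. every increasing tableau of straight shape that is jeu de taquin equivalent to U is equal to U. -/
open Classical

noncomputable section

namespace JDTAux

variable {L : Type} [PartialOrder L]

theorem Neighbor.symm {a b : L} (h : Neighbor a b) : Neighbor b a := h.elim Or.inr Or.inl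

/-- The dot value. -/
abbrev dt : ZDot := Sum.inr ()

section SwapBasics

variable {V : Type} {s s' : V} {S : L → Option V} {α : L}

theorem swapVal_cases (s s' : V) (S : L → Option V) (α : L) :
    (S α = some s ∧ (∃ β, Neighbor α β ∧ S β = some s') ∧ swapVal s s' S α = some s')
  ∨ (S α = some s' ∧ (∃ β, Neighbor α β ∧ S β = some s) ∧ swapVal s s' S α = some s)
  ∨ (swapVal s s' S α = S α ∧ ¬(S α = some s ∧ ∃ β, Neighbor α β ∧ S β = some s')
       ∧ ¬(S α = some s' ∧ ∃ β, Neighbor α β ∧ S β = some s)) := by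
  unfold swapVal
  split_ifs with h1 h2
  · exact Or.inl ⟨h1.1, h1.2, rfl⟩
  · exact Or.inr (Or.inl ⟨h2.1, h2.2, rfl⟩)
  · exact Or.inr (Or.inr ⟨rfl, h1, h2⟩)

theorem swapVal_none_iff : swapVal s s' S α = none ↔ S α = none := by
  rcases swapVal_cases s s' S α with ⟨h, h2, h3⟩ | ⟨h, h2, h3⟩ | ⟨h, h2, h3⟩ <;>
    simp [h, h3]

theorem swapVal_eq_of_ne (h1 : S α ≠ some s) (h2 : S α ≠ some s') :
    swapVal s s' S α = S α := by
  rcases swapVal_cases s s' S α with ⟨h, _, _⟩ | ⟨h, _, _⟩ | ⟨h, _, _⟩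
  · exact absurd h h1
  · exact absurd h h2
  · exact h

end SwapBasics

section ZDotSwap

theorem zdot_cases (o : Option ZDot) :
    o = none ∨ (∃ x : ℤ, o = some (Sum.inl x)) ∨ o = some dt := by
  rcases o with _ | (x | u)
  · exact Or.inl rfl
  · exact Or.inr (Or.inl ⟨x, rfl⟩)
  · exact Or.inr (Or.inr rfl)

variable {v : ℤ} {S : L → Option ZDot} {α : L} {x : ℤ}

theorem val_inv (h : swapVal (Sum.inl v) dt S α = some (Sum.inl x)) :
    (S α = some (Sum.inl x) ∧ (x = v → ¬ ∃ β, Neighbor α β ∧ S β = some dt))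
  ∨ (x = v ∧ S α = some dt ∧ ∃ β, Neighbor α β ∧ S β = some (Sum.inl v)) := by
  rcases swapVal_cases (Sum.inl v) dt S α with ⟨h1, h2, h3⟩ | ⟨h1, h2, h3⟩ | ⟨h1, h2, h3⟩
  · rw [h] at h3; simp at h3
  · rw [h] at h3
    have : x = v := by injection h3.symm with h4; injection h4 with h5; omega
    exact Or.inr ⟨this, h1, h2⟩
  · rw [h] at h1
    refine Or.inl ⟨h1.symm, fun hxv hnb => h2 ⟨by rw [← h1, hxv], hnb⟩⟩

theorem dot_inv (h : swapVal (Sum.inl v) dt S α = some dt) :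
    (S α = some dt ∧ ¬ ∃ β, Neighbor α β ∧ S β = some (Sum.inl v))
  ∨ (S α = some (Sum.inl v) ∧ ∃ β, Neighbor α β ∧ S β = some dt) := by
  rcases swapVal_cases (Sum.inl v) dt S α with ⟨h1, h2, h3⟩ | ⟨h1, h2, h3⟩ | ⟨h1, h2, h3⟩
  · exact Or.inr ⟨h1, h2⟩
  · rw [h] at h3; simp at h3
  · rw [h] at h1
    exact Or.inl ⟨h1.symm, fun hnb => h3 ⟨h1.symm, hnb⟩⟩

theorem keep_val (h : S α = some (Sum.inl x)) (hx : x ≠ v) :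
    swapVal (Sum.inl v) dt S α = some (Sum.inl x) := by
  rw [swapVal_eq_of_ne (by simp [h, hx]) (by simp [h])]; exact h

theorem becomes_dot (h : S α = some (Sum.inl v)) (hnb : ∃ β, Neighbor α β ∧ S β = some dt) :
    swapVal (Sum.inl v) dt S α = some dt := by
  rcases swapVal_cases (Sum.inl v) dt S α with ⟨h1, h2, h3⟩ | ⟨h1, h2, h3⟩ | ⟨h1, h2, h3⟩
  · exact h3
  · rw [h] at h1; simp at h1
  · exact absurd ⟨h, hnb⟩ h2

theorem becomes_val (h : S α = some dt) (hnb : ∃ β, Neighbor α β ∧ S β = some (Sum.inl v)) :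
    swapVal (Sum.inl v) dt S α = some (Sum.inl v) := by
  rcases swapVal_cases (Sum.inl v) dt S α with ⟨h1, h2, h3⟩ | ⟨h1, h2, h3⟩ | ⟨h1, h2, h3⟩
  · rw [h] at h1; simp at h1
  · exact h3
  · exact absurd ⟨h, hnb⟩ h3

theorem stays_dot (h : S α = some dt) (hnb : ¬ ∃ β, Neighbor α β ∧ S β = some (Sum.inl v)) :
    swapVal (Sum.inl v) dt S α = some dt := by
  rcases swapVal_cases (Sum.inl v) dt S α with ⟨h1, h2, h3⟩ | ⟨h1, h2, h3⟩ | ⟨h1, h2, h3⟩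
  · rw [h] at h1; simp at h1
  · exact absurd h2 hnb
  · rw [h1]; exact h

theorem stays_none (h : S α = none) : swapVal (Sum.inl v) dt S α = none :=
  swapVal_none_iff.mpr h

end ZDotSwap

end JDTAux

namespace JDTAux

variable {L : Type} [PartialOrder L]

theorem restrictInt_eq_some_iff {S : L → Option ZDot} {α : L} {x : ℤ} :
    restrictInt S α = some x ↔ S α = some (Sum.inl x) := by
  rcases zdot_cases (S α) with h | ⟨y, h⟩ | h <;> simp [restrictInt, h, dt]

theorem restrictInt_ne_none_iff {S : L → Option ZDot} {α : L} :
    restrictInt S α ≠ none ↔ ∃ x : ℤ, S α = some (Sum.inl x) := by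
  rcases zdot_cases (S α) with h | ⟨y, h⟩ | h <;> simp [restrictInt, h, dt]

/-- Shape context for a forward slide. -/
structure FwdCtx (lam nu C : Finset L) : Prop where
  lamS : StraightShape lam
  nuS : StraightShape nu
  sub : lam ⊆ nu
  cmax : ∀ c ∈ C, c ∈ lam ∧ ∀ d ∈ lam, ¬ c < d

/-- Invariant during a forward slide: all values `< v` processed. -/
structure FwdInv (lam nu C : Finset L) (v b : ℤ) (S : L → Option ZDot) : Prop where
  supp : ∀ α : L, S α ≠ none ↔ (α ∈ nu ∧ α ∉ lam) ∨ α ∈ C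
  inc : ∀ ⦃α β : L⦄, α < β → ∀ ⦃x y : ℤ⦄,
      S α = some (Sum.inl x) → S β = some (Sum.inl y) → x < y
  above : ∀ ⦃α β : L⦄, S α = some dt → α < β →
      S β = none ∨ ∃ y, S β = some (Sum.inl y) ∧ v ≤ y
  below : ∀ ⦃α β : L⦄, S α = some dt → β < α →
      S β = none ∨ ∃ y, S β = some (Sum.inl y) ∧ y < v
  le_b : ∀ ⦃α : L⦄ ⦃x : ℤ⦄, S α = some (Sum.inl x) → x ≤ b

theorem FwdInv.mem_nu (ctx : FwdCtx lam nu C) {v b : ℤ} {S : L → Option ZDot}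
    (I : FwdInv lam nu C v b S) {α : L} (h : S α ≠ none) : α ∈ nu := by
  rcases (I.supp α).mp h with ⟨h1, _⟩ | h1
  · exact h1
  · exact ctx.sub (ctx.cmax α h1).1

/-- Key chain lemma: a box with the current value `v` strictly above a dot must cover it. -/
theorem fwd_keychain {lam nu C : Finset L} (ctx : FwdCtx lam nu C) {v b : ℤ}
    {S : L → Option ZDot} (I : FwdInv lam nu C v b S)
    {α β : L} (hα : S α = some dt) (hab : α < β) (hβ : S β = some (Sum.inl v)) :
    α ⋖ β := by
  have hβnu : β ∈ nu := I.mem_nu ctx (by rw [hβ]; simp)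
  have hne : (nu.filter (fun γ => α < γ ∧ γ ≤ β)).Nonempty :=
    ⟨β, by simp [hβnu, hab]⟩
  obtain ⟨γ, hγmem, hγmin⟩ : ∃ m ∈ _, ∀ x ∈ _, ¬x < m := by
    obtain ⟨m, hm⟩ := Finset.exists_minimal hne; exact ⟨m, hm.1, fun x hx => hm.not_lt hx⟩
  rw [Finset.mem_filter] at hγmem
  obtain ⟨hγnu, hαγ, hγβ⟩ := hγmem
  have hcov : α ⋖ γ := by
    refine ⟨hαγ, fun δ hαδ hδγ => ?_⟩
    exact hγmin δ (Finset.mem_filter.mpr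
      ⟨ctx.nuS γ hγnu δ hδγ.le, hαδ, hδγ.le.trans hγβ⟩) hδγ
  rcases eq_or_lt_of_le hγβ with rfl | hlt
  · exact hcov
  exfalso
  have hγO : S γ ≠ none := by
    apply (I.supp γ).mpr
    left
    refine ⟨hγnu, fun hγlam => ?_⟩
    have hαlam : α ∈ lam := ctx.lamS γ hγlam α hαγ.le
    rcases (I.supp α).mp (by rw [hα]; simp) with ⟨_, h⟩ | hαC
    · exact h hαlam
    · exact (ctx.cmax α hαC).2 γ hγlam hαγ
  rcases zdot_cases (S γ) with h | ⟨y, h⟩ | h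
  · exact hγO h
  · rcases I.above hα hαγ with h' | ⟨y', hy', hvy⟩
    · exact hγO h'
    · rw [h] at hy'
      have : y = y' := by simpa using hy'
      have : y < v := I.inc hlt h hβ
      omega
  · rcases I.above hα hαγ with h' | ⟨y', hy', _⟩
    · exact hγO h'
    · rw [h] at hy'; simp [dt] at hy'

/-- One swap step preserves the invariant. -/
theorem fwd_step {lam nu C : Finset L} (ctx : FwdCtx lam nu C) {v b : ℤ}
    {S : L → Option ZDot} (hv : v ≤ b) (I : FwdInv lam nu C v b S) :
    FwdInv lam nu C (v + 1) b (swapVal (Sum.inl v) dt S) := by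
  set S' := swapVal (Sum.inl v) dt S with hS'
  constructor
  · intro α
    exact (not_congr swapVal_none_iff).trans (I.supp α)
  · -- inc
    intro α β hab x y hx hy
    rcases val_inv hx with ⟨hxo, hxc⟩ | ⟨hxv, hαdt, hnbv⟩
    · rcases val_inv hy with ⟨hyo, hyc⟩ | ⟨hyv, hβdt, hnb2⟩
      · exact I.inc hab hxo hyo
      · rcases I.below hβdt hab with h | ⟨x', hx', hx'v⟩
        · rw [hxo] at h; simp at h
        · rw [hxo] at hx'
          have : x = x' := by simpa using hx'
          omega
    · rcases val_inv hy with ⟨hyo, hyc⟩ | ⟨hyv, hβdt, hnb2⟩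
      · rcases I.above hαdt hab with h | ⟨y', hy', hvy⟩
        · rw [hyo] at h; simp at h
        · rw [hyo] at hy'
          have hyy : y = y' := by simpa using hy'
          by_cases hyv : y = v
          · exfalso
            have hcov := fwd_keychain ctx I hαdt hab (by rw [hyo, hyv])
            exact hyc hyv ⟨α, Or.inr hcov, hαdt⟩
          · omega
      · rcases I.above hαdt hab with h | ⟨y', hy', hvy⟩
        · rw [hβdt] at h; simp at h
        · rw [hβdt] at hy'; simp [dt] at hy'
  · -- above
    intro α β hα hab
    rcases dot_inv hα with ⟨hαdt, hnb⟩ | ⟨hαv, _⟩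
    · rcases I.above hαdt hab with h | ⟨y, hy, hvy⟩
      · exact Or.inl (stays_none h)
      · by_cases hyv : y = v
        · exact absurd ⟨β, Or.inl (fwd_keychain ctx I hαdt hab (hyv ▸ hy)), hyv ▸ hy⟩ hnb
        · exact Or.inr ⟨y, keep_val hy hyv, by omega⟩
    · rcases zdot_cases (S β) with h | ⟨y, hy⟩ | hβdt
      · exact Or.inl (stays_none h)
      · have hvy : v < y := I.inc hab hαv hy
        exact Or.inr ⟨y, keep_val hy (by omega), by omega⟩
      · rcases I.below hβdt hab with h | ⟨x, hx, hxv⟩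
        · rw [hαv] at h; simp at h
        · rw [hαv] at hx
          have : (v : ℤ) = x := by simpa using hx
          omega
  · -- below
    intro α β hα hba
    rcases dot_inv hα with ⟨hαdt, hnb⟩ | ⟨hαv, _⟩
    · rcases I.below hαdt hba with h | ⟨x, hx, hxv⟩
      · exact Or.inl (stays_none h)
      · exact Or.inr ⟨x, keep_val hx (by omega), by omega⟩
    · rcases zdot_cases (S β) with h | ⟨x, hx⟩ | hβdt
      · exact Or.inl (stays_none h)
      · have hxv : x < v := I.inc hba hx hαv
        exact Or.inr ⟨x, keep_val hx (by omega), by omega⟩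
      · have hcov := fwd_keychain ctx I hβdt hba hαv
        exact Or.inr ⟨v, becomes_val hβdt ⟨α, Or.inl hcov, hαv⟩, by omega⟩
  · -- le_b
    intro α x hx
    rcases val_inv hx with ⟨hxo, _⟩ | ⟨rfl, _, _⟩
    · exact I.le_b hxo
    · exact hv

end JDTAux

namespace JDTAux

set_option linter.unusedSectionVars false

variable {L : Type} [PartialOrder L]

theorem fwd_iter {lam nu C : Finset L} (ctx : FwdCtx lam nu C) {a b : ℤ}
    {S : L → Option ZDot} (I : FwdInv lam nu C a b S) :
    ∀ n : ℕ, a + n ≤ b + 1 → FwdInv lam nu C (a + n) b (swapUp a n S) := by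
  intro n
  induction n with
  | zero => intro _; simpa [swapUp] using I
  | succ n ih =>
    intro h
    have hcast : ((n + 1 : ℕ) : ℤ) = (n : ℤ) + 1 := by push_cast; ring
    have h1 : a + (n : ℤ) ≤ b := by rw [hcast] at h; omega
    have step := fwd_step ctx h1 (ih (by omega))
    have : a + ((n + 1 : ℕ) : ℤ) = (a + (n : ℤ)) + 1 := by rw [hcast]; ring
    rw [this]
    exact step

theorem fwd_initial {lam nu C : Finset L} {T : L → Option ℤ} {a b : ℤ}
    (ctx : FwdCtx lam nu C) (hsh : shapeOf T = (nu : Set L) \ (lam : Set L))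
    (hinc : Increasing T) (hval : ValuesIn T a b) :
    FwdInv lam nu C a b (addDots C (toDotted T)) := by
  have hT : ∀ α : L, T α ≠ none ↔ (α ∈ nu ∧ α ∉ lam) := by
    intro α
    have := Set.ext_iff.mp hsh α
    simpa [shapeOf] using this
  have hval' : ∀ {α : L} (h : α ∉ C) {x : ℤ},
      addDots C (toDotted T) α = some (Sum.inl x) → T α = some x := by
    intro α h x hx
    simp only [addDots, if_neg h, toDotted] at hx
    cases hTα : T α with
    | none => rw [hTα] at hx; simp at hx
    | some y => rw [hTα] at hx; simp at hx; simp [hTα, hx]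
  have hdot : ∀ {α : L}, addDots C (toDotted T) α = some dt → α ∈ C := by
    intro α hα
    by_contra h
    simp only [addDots, if_neg h, toDotted] at hα
    cases hTα : T α with
    | none => rw [hTα] at hα; simp at hα
    | some y => rw [hTα] at hα; simp [dt] at hα
  constructor
  · intro α
    by_cases h : α ∈ C
    · simp [addDots, h]
    · simp only [addDots, if_neg h, toDotted]
      cases hTα : T α with
      | none =>
        simp only [hTα, Option.map_none]
        constructor
        · intro hc; exact absurd rfl hc
        · intro hc
          rcases hc with h1 | h1
          · exact absurd ((hT α).mpr h1) (by simp [hTα])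
          · exact absurd h1 h
      | some y =>
        simp only [hTα, Option.map_some]
        constructor
        · intro _
          exact Or.inl ((hT α).mp (by simp [hTα]))
        · intro _; simp
  · intro α β hab x y hx hy
    by_cases hα : α ∈ C
    · simp [addDots, hα, dt] at hx
    by_cases hβ : β ∈ C
    · simp [addDots, hβ, dt] at hy
    exact hinc α β hab x y (hval' hα hx) (hval' hβ hy)
  · intro α β hα hab
    have hαC := hdot hα
    by_cases hβ : β ∈ C
    · exact absurd hab ((ctx.cmax α hαC).2 β (ctx.cmax β hβ).1)
    · simp only [addDots, if_neg hβ, toDotted]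
      cases hTβ : T β with
      | none => simp
      | some y =>
        right
        exact ⟨y, by simp, (hval β y hTβ).1⟩
  · intro α β hα hba
    have hαC := hdot hα
    by_cases hβ : β ∈ C
    · exact absurd hba ((ctx.cmax β hβ).2 α (ctx.cmax α hαC).1)
    · simp only [addDots, if_neg hβ, toDotted]
      cases hTβ : T β with
      | none => simp
      | some y =>
        exfalso
        have hβlam : β ∈ lam := ctx.lamS α (ctx.cmax α hαC).1 β hba.le
        exact ((hT β).mp (by simp [hTβ])).2 hβlam
  · intro α x hx
    by_cases hα : α ∈ C
    · simp [addDots, hα, dt] at hx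
    · exact (hval α x (hval' hα hx)).2

theorem forward_slide_spec {lam nu C : Finset L} {T : L → Option ℤ} {a b : ℤ}
    (hpair : IsSkewPair lam nu) (hsh : shapeOf T = (nu : Set L) \ (lam : Set L))
    (hinc : Increasing T) (hval : ValuesIn T a b)
    (hC : ∀ c ∈ C, c ∈ lam ∧ ∀ d ∈ lam, ¬ c < d) :
    ∃ lam' nu' : Finset L, IsSkewPair lam' nu' ∧ lam' ⊆ lam \ C ∧
      Increasing (restrictInt (swapUp a (b - a + 1).toNat (addDots C (toDotted T)))) ∧
      shapeOf (restrictInt (swapUp a (b - a + 1).toNat (addDots C (toDotted T)))) =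
        ((nu' : Finset L) : Set L) \ ((lam' : Finset L) : Set L) := by
  obtain ⟨hlamS, hnuS, hsub⟩ := hpair
  have ctx : FwdCtx lam nu C := ⟨hlamS, hnuS, hsub, hC⟩
  set Sf := swapUp a (b - a + 1).toNat (addDots C (toDotted T)) with hSf
  by_cases hab : a ≤ b
  · have hn : (((b - a + 1).toNat : ℕ) : ℤ) = b - a + 1 := Int.toNat_of_nonneg (by omega)
    have I := fwd_iter ctx (fwd_initial ctx hsh hinc hval) (b - a + 1).toNat (by omega)
    rw [show a + (((b - a + 1).toNat : ℕ) : ℤ) = b + 1 by omega] at I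
    rw [← hSf] at I
    have habove : ∀ ⦃α β : L⦄, Sf α = some dt → α < β → Sf β = none := by
      intro α β hα hlt
      rcases I.above hα hlt with h | ⟨y, hy, hvy⟩
      · exact h
      · exact absurd (I.le_b hy) (by omega)
    set D := nu.filter (fun α => Sf α = some dt) with hD
    have hmemD : ∀ {α : L}, α ∈ D ↔ α ∈ nu ∧ Sf α = some dt := by
      intro α; rw [hD, Finset.mem_filter]
    refine ⟨lam \ C, nu \ D, ⟨?_, ?_, ?_⟩, le_refl _, ?_, ?_⟩
    · -- lam \ C straight
      intro x hx y hyx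
      rw [Finset.mem_sdiff] at hx ⊢
      refine ⟨hlamS x hx.1 y hyx, fun hyC => ?_⟩
      rcases eq_or_lt_of_le hyx with rfl | hylt
      · exact hx.2 hyC
      · exact (hC y hyC).2 x hx.1 hylt
    · -- nu \ D straight
      intro x hx y hyx
      rw [Finset.mem_sdiff] at hx ⊢
      refine ⟨hnuS x hx.1 y hyx, fun hyD => ?_⟩
      rcases eq_or_lt_of_le hyx with rfl | hylt
      · exact hx.2 hyD
      · have hxnone : Sf x = none := habove (hmemD.mp hyD).2 hylt
        have hxlam : x ∈ lam := by
          by_contra hxl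
          exact ((I.supp x).mpr (Or.inl ⟨hx.1, hxl⟩)) hxnone
        have hylam : y ∈ lam := hlamS x hxlam y hyx
        have hyC : y ∈ C := by
          rcases (I.supp y).mp (by rw [(hmemD.mp hyD).2]; simp) with ⟨_, h⟩ | h
          · exact absurd hylam h
          · exact h
        exact (hC y hyC).2 x hxlam hylt
    · -- lam \ C ⊆ nu \ D
      intro x hx
      rw [Finset.mem_sdiff] at hx ⊢
      refine ⟨hsub hx.1, fun hxD => ?_⟩
      rcases (I.supp x).mp (by rw [(hmemD.mp hxD).2]; simp) with ⟨_, h⟩ | h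
      · exact h hx.1
      · exact hx.2 h
    · -- increasing
      intro α β hlt x y hx hy
      exact I.inc hlt (restrictInt_eq_some_iff.mp hx) (restrictInt_eq_some_iff.mp hy)
    · -- shape
      ext α
      simp only [shapeOf, Set.mem_setOf_eq, Set.mem_diff, Finset.coe_sdiff,
        Finset.mem_coe, Finset.mem_sdiff]
      rw [show (restrictInt Sf α ≠ none) ↔ ∃ x : ℤ, Sf α = some (Sum.inl x) from
        restrictInt_ne_none_iff]
      constructor
      · rintro ⟨x, hx⟩
        have hne : Sf α ≠ none := by rw [hx]; simp
        refine ⟨⟨I.mem_nu ctx hne, fun hαD => ?_⟩, fun hαl => ?_⟩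
        · rw [(hmemD.mp hαD).2] at hx; simp [dt] at hx
        · rcases (I.supp α).mp hne with ⟨_, h⟩ | h
          · exact h hαl.1
          · exact hαl.2 h
      · rintro ⟨⟨hαnu, hαD⟩, hαl⟩
        have hne : Sf α ≠ none := by
          apply (I.supp α).mpr
          by_cases h : α ∈ lam
          · right
            by_contra hc
            exact hαl ⟨h, hc⟩
          · exact Or.inl ⟨hαnu, h⟩
        rcases zdot_cases (Sf α) with h | ⟨x, h⟩ | h
        · exact absurd h hne
        · exact ⟨x, h⟩
        · exact absurd (hmemD.mpr ⟨hαnu, h⟩) hαD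
  · -- degenerate case b < a
    have hn : (b - a + 1).toNat = 0 := by omega
    have hTnone : ∀ α : L, T α = none := by
      intro α
      cases hTα : T α with
      | none => rfl
      | some x => exact absurd (hval α x hTα) (by omega)
    have hR : ∀ α : L, restrictInt Sf α = none := by
      intro α
      rw [hSf, hn]
      show restrictInt (addDots C (toDotted T)) α = none
      by_cases h : α ∈ C <;> simp [restrictInt, addDots, h, toDotted, hTnone α]
    refine ⟨∅, ∅, ⟨?_, ?_, le_refl _⟩, by simp, ?_, ?_⟩
    · intro x hx; simp at hx
    · intro x hx; simp at hx
    · intro α β hlt x y hx hy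
      rw [hR α] at hx; exact absurd hx (by simp)
    · ext α
      simp [shapeOf, hR α]

end JDTAux

namespace JDTAux

set_option linter.unusedSectionVars false

variable {L : Type} [PartialOrder L]

/-- Shape context for a reverse slide. -/
structure RevCtx (lam nu Chat : Finset L) : Prop where
  lamS : StraightShape lam
  nuS : StraightShape nu
  sub : lam ⊆ nu
  cmin : ∀ c ∈ Chat, c ∉ nu ∧ ∀ d : L, d ∉ nu → ¬ d < c

theorem RevCtx.below_mem_nu {lam nu Chat : Finset L} (ctx : RevCtx lam nu Chat)
    {γ β : L} (h : γ < β) (hβ : β ∈ nu ∨ β ∈ Chat) : γ ∈ nu := by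
  rcases hβ with hβ | hβ
  · exact ctx.nuS β hβ γ h.le
  · by_contra hγ
    exact (ctx.cmin β hβ).2 γ hγ h

/-- Invariant during a reverse slide: all values `> w` processed. -/
structure RevInv (lam nu Chat : Finset L) (a b w : ℤ) (S : L → Option ZDot) : Prop where
  supp : ∀ α : L, S α ≠ none ↔ (α ∈ nu ∧ α ∉ lam) ∨ α ∈ Chat
  inc : ∀ ⦃α β : L⦄, α < β → ∀ ⦃x y : ℤ⦄,
      S α = some (Sum.inl x) → S β = some (Sum.inl y) → x < y
  above : ∀ ⦃α β : L⦄, S α = some dt → α < β →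
      S β = none ∨ ∃ y, S β = some (Sum.inl y) ∧ w < y
  below : ∀ ⦃α β : L⦄, S α = some dt → β < α →
      S β = none ∨ ∃ y, S β = some (Sum.inl y) ∧ y ≤ w
  ge_a : ∀ ⦃α : L⦄ ⦃x : ℤ⦄, S α = some (Sum.inl x) → a ≤ x
  le_b : ∀ ⦃α : L⦄ ⦃x : ℤ⦄, S α = some (Sum.inl x) → x ≤ b

theorem RevInv.mem_or {lam nu Chat : Finset L} {a b w : ℤ} {S : L → Option ZDot}
    (I : RevInv lam nu Chat a b w S) {α : L} (h : S α ≠ none) : α ∈ nu ∨ α ∈ Chat := by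
  rcases (I.supp α).mp h with ⟨h1, _⟩ | h1
  · exact Or.inl h1
  · exact Or.inr h1

/-- Key chain lemma, reverse version: a box with the current value `w` strictly
below a dot must be covered by it. -/
theorem rev_keychain {lam nu Chat : Finset L} (ctx : RevCtx lam nu Chat) {a b w : ℤ}
    {S : L → Option ZDot} (I : RevInv lam nu Chat a b w S)
    {α β : L} (hβ : S β = some dt) (hab : α < β) (hα : S α = some (Sum.inl w)) :
    α ⋖ β := by
  have hαnu : α ∈ nu := ctx.below_mem_nu hab (I.mem_or (by rw [hβ]; simp))
  have hne : (nu.filter (fun γ => α ≤ γ ∧ γ < β)).Nonempty :=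
    ⟨α, by simp [hαnu, hab]⟩
  obtain ⟨γ, hγmem, hγmax⟩ : ∃ m ∈ _, ∀ x ∈ _, ¬m < x := by
    obtain ⟨m, hm⟩ := Finset.exists_maximal hne; exact ⟨m, hm.1, fun x hx => hm.not_gt hx⟩
  rw [Finset.mem_filter] at hγmem
  obtain ⟨hγnu, hαγ, hγβ⟩ := hγmem
  have hcov : γ ⋖ β := by
    refine ⟨hγβ, fun δ hγδ hδβ => ?_⟩
    exact hγmax δ (Finset.mem_filter.mpr
      ⟨ctx.below_mem_nu hδβ (I.mem_or (by rw [hβ]; simp)), hαγ.trans hγδ.le, hδβ⟩) hγδ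
  rcases eq_or_lt_of_le hαγ with rfl | hlt
  · exact hcov
  exfalso
  have hγO : S γ ≠ none := by
    apply (I.supp γ).mpr
    left
    refine ⟨hγnu, fun hγlam => ?_⟩
    have hαlam : α ∈ lam := ctx.lamS γ hγlam α hlt.le
    rcases (I.supp α).mp (by rw [hα]; simp) with ⟨_, h⟩ | h
    · exact h hαlam
    · exact (ctx.cmin α h).1 hαnu
  rcases zdot_cases (S γ) with h | ⟨y, h⟩ | h
  · exact hγO h
  · rcases I.below hβ hγβ with h' | ⟨y', hy', hwy⟩
    · exact hγO h'
    · rw [h] at hy'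
      have h1 : y = y' := by simpa using hy'
      have h2 : w < y := I.inc hlt hα h
      omega
  · rcases I.above h hγβ with h' | ⟨y', hy', _⟩
    · rw [hβ] at h'; simp at h'
    · rw [hβ] at hy'; simp [dt] at hy'

/-- One swap step preserves the reverse invariant. -/
theorem rev_step {lam nu Chat : Finset L} (ctx : RevCtx lam nu Chat) {a b w : ℤ}
    {S : L → Option ZDot} (hwa : a ≤ w) (hwb : w ≤ b)
    (I : RevInv lam nu Chat a b w S) :
    RevInv lam nu Chat a b (w - 1) (swapVal (Sum.inl w) dt S) := by
  constructor
  · intro α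
    exact (not_congr swapVal_none_iff).trans (I.supp α)
  · -- inc
    intro α β hab x y hx hy
    rcases val_inv hx with ⟨hxo, hxc⟩ | ⟨hxv, hαdt, hnbv⟩
    · rcases val_inv hy with ⟨hyo, hyc⟩ | ⟨hyv, hβdt, hnb2⟩
      · exact I.inc hab hxo hyo
      · rcases I.below hβdt hab with h | ⟨x', hx', hx'w⟩
        · rw [hxo] at h; simp at h
        · rw [hxo] at hx'
          have hxx : x = x' := by simpa using hx'
          by_cases hxw : x = w
          · exfalso
            have hcov := rev_keychain ctx I hβdt hab (by rw [hxo, hxw])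
            exact hxc hxw ⟨β, Or.inl hcov, hβdt⟩
          · omega
    · rcases val_inv hy with ⟨hyo, hyc⟩ | ⟨hyv, hβdt, hnb2⟩
      · rcases I.above hαdt hab with h | ⟨y', hy', hwy⟩
        · rw [hyo] at h; simp at h
        · rw [hyo] at hy'
          have : y = y' := by simpa using hy'
          omega
      · rcases I.above hαdt hab with h | ⟨y', hy', hwy⟩
        · rw [hβdt] at h; simp at h
        · rw [hβdt] at hy'; simp [dt] at hy'
  · -- above
    intro α β hα hab
    rcases dot_inv hα with ⟨hαdt, hnb⟩ | ⟨hαv, _⟩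
    · rcases I.above hαdt hab with h | ⟨y, hy, hwy⟩
      · exact Or.inl (stays_none h)
      · exact Or.inr ⟨y, keep_val hy (by omega), by omega⟩
    · rcases zdot_cases (S β) with h | ⟨y, hy⟩ | hβdt
      · exact Or.inl (stays_none h)
      · have hwy : w < y := I.inc hab hαv hy
        exact Or.inr ⟨y, keep_val hy (by omega), by omega⟩
      · have hcov := rev_keychain ctx I hβdt hab hαv
        exact Or.inr ⟨w, becomes_val hβdt ⟨α, Or.inr hcov, hαv⟩, by omega⟩
  · -- below
    intro α β hα hba
    rcases dot_inv hα with ⟨hαdt, hnb⟩ | ⟨hαv, _⟩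
    · rcases I.below hαdt hba with h | ⟨x, hx, hxw⟩
      · exact Or.inl (stays_none h)
      · by_cases hxw' : x = w
        · exfalso
          have hcov := rev_keychain ctx I hαdt hba (by rw [hx, hxw'])
          exact hnb ⟨β, Or.inr hcov, by rw [hx, hxw']⟩
        · exact Or.inr ⟨x, keep_val hx hxw', by omega⟩
    · rcases zdot_cases (S β) with h | ⟨x, hx⟩ | hβdt
      · exact Or.inl (stays_none h)
      · have hxw : x < w := I.inc hba hx hαv
        exact Or.inr ⟨x, keep_val hx (by omega), by omega⟩
      · rcases I.above hβdt hba with h | ⟨y', hy', hwy⟩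
        · rw [hαv] at h; simp at h
        · rw [hαv] at hy'
          have : w = y' := by simpa using hy'
          omega
  · -- ge_a
    intro α x hx
    rcases val_inv hx with ⟨hxo, _⟩ | ⟨hxv, _, _⟩
    · exact I.ge_a hxo
    · omega
  · -- le_b
    intro α x hx
    rcases val_inv hx with ⟨hxo, _⟩ | ⟨hxv, _, _⟩
    · exact I.le_b hxo
    · omega

theorem rev_iter {lam nu Chat : Finset L} (ctx : RevCtx lam nu Chat) {a b : ℤ}
    {S : L → Option ZDot} (I : RevInv lam nu Chat a b b S) :
    ∀ k : ℕ, a - 1 ≤ b - k → RevInv lam nu Chat a b (b - k) (swapDown b k S) := by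
  intro k
  induction k with
  | zero => intro _; simpa [swapDown] using I
  | succ k ih =>
    intro h
    have hcast : ((k + 1 : ℕ) : ℤ) = (k : ℤ) + 1 := by push_cast; ring
    rw [hcast] at h
    have step := rev_step ctx (w := b - k) (by omega) (by omega) (ih (by omega))
    have heq : b - ((k + 1 : ℕ) : ℤ) = (b - (k : ℤ)) - 1 := by rw [hcast]; ring
    rw [heq]
    exact step

theorem rev_initial {lam nu Chat : Finset L} {T : L → Option ℤ} {a b : ℤ}
    (ctx : RevCtx lam nu Chat) (hsh : shapeOf T = (nu : Set L) \ (lam : Set L))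
    (hinc : Increasing T) (hval : ValuesIn T a b) :
    RevInv lam nu Chat a b b (addDots Chat (toDotted T)) := by
  have hT : ∀ α : L, T α ≠ none ↔ (α ∈ nu ∧ α ∉ lam) := by
    intro α
    have := Set.ext_iff.mp hsh α
    simpa [shapeOf] using this
  have hval' : ∀ {α : L} (h : α ∉ Chat) {x : ℤ},
      addDots Chat (toDotted T) α = some (Sum.inl x) → T α = some x := by
    intro α h x hx
    simp only [addDots, if_neg h, toDotted] at hx
    cases hTα : T α with
    | none => rw [hTα] at hx; simp at hx
    | some y => rw [hTα] at hx; simp at hx; simp [hTα, hx]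
  have hdot : ∀ {α : L}, addDots Chat (toDotted T) α = some dt → α ∈ Chat := by
    intro α hα
    by_contra h
    simp only [addDots, if_neg h, toDotted] at hα
    cases hTα : T α with
    | none => rw [hTα] at hα; simp at hα
    | some y => rw [hTα] at hα; simp [dt] at hα
  constructor
  · intro α
    by_cases h : α ∈ Chat
    · simp [addDots, h]
    · simp only [addDots, if_neg h, toDotted]
      cases hTα : T α with
      | none =>
        simp only [hTα, Option.map_none]
        constructor
        · intro hc; exact absurd rfl hc
        · intro hc
          rcases hc with h1 | h1
          · exact absurd ((hT α).mpr h1) (by simp [hTα])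
          · exact absurd h1 h
      | some y =>
        simp only [hTα, Option.map_some]
        constructor
        · intro _
          exact Or.inl ((hT α).mp (by simp [hTα]))
        · intro _; simp
  · intro α β hab x y hx hy
    by_cases hα : α ∈ Chat
    · simp [addDots, hα, dt] at hx
    by_cases hβ : β ∈ Chat
    · simp [addDots, hβ, dt] at hy
    exact hinc α β hab x y (hval' hα hx) (hval' hβ hy)
  · -- above
    intro α β hα hab
    have hαC := hdot hα
    by_cases hβ : β ∈ Chat
    · exact absurd hab ((ctx.cmin β hβ).2 α (ctx.cmin α hαC).1)
    · simp only [addDots, if_neg hβ, toDotted]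
      cases hTβ : T β with
      | none => simp
      | some y =>
        exfalso
        have hβnu : β ∈ nu := ((hT β).mp (by simp [hTβ])).1
        exact (ctx.cmin α hαC).1 (ctx.nuS β hβnu α hab.le)
  · -- below
    intro α β hα hba
    have hαC := hdot hα
    by_cases hβ : β ∈ Chat
    · exact absurd hba ((ctx.cmin α hαC).2 β (ctx.cmin β hβ).1)
    · simp only [addDots, if_neg hβ, toDotted]
      cases hTβ : T β with
      | none => simp
      | some y =>
        right
        exact ⟨y, by simp, (hval β y hTβ).2⟩
  · intro α x hx
    by_cases hα : α ∈ Chat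
    · simp [addDots, hα, dt] at hx
    · exact (hval α x (hval' hα hx)).1
  · intro α x hx
    by_cases hα : α ∈ Chat
    · simp [addDots, hα, dt] at hx
    · exact (hval α x (hval' hα hx)).2

end JDTAux

namespace JDTAux

set_option linter.unusedSectionVars false

variable {L : Type} [PartialOrder L]

section Invol

variable {s s' : ZDot} {S : L → Option ZDot} {α : L}

theorem swap_b1 (hss : s ≠ s') (h : S α = some s)
    (hnb : ∃ β, Neighbor α β ∧ S β = some s') : swapVal s s' S α = some s' := by
  rcases swapVal_cases s s' S α with ⟨h1, h2, h3⟩ | ⟨h1, h2, h3⟩ | ⟨h1, h2, h3⟩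
  · exact h3
  · rw [h] at h1; exact absurd (Option.some_injective _ h1) hss
  · exact absurd ⟨h, hnb⟩ h2

theorem swap_b2 (hss : s ≠ s') (h : S α = some s')
    (hnb : ∃ β, Neighbor α β ∧ S β = some s) : swapVal s s' S α = some s := by
  rcases swapVal_cases s s' S α with ⟨h1, h2, h3⟩ | ⟨h1, h2, h3⟩ | ⟨h1, h2, h3⟩
  · rw [h] at h1; exact absurd (Option.some_injective _ h1).symm hss
  · exact h3
  · exact absurd ⟨h, hnb⟩ h3

theorem swap_keep1 (hss : s ≠ s') (h : S α = some s)
    (hnb : ¬∃ β, Neighbor α β ∧ S β = some s') : swapVal s s' S α = some s := by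
  rcases swapVal_cases s s' S α with ⟨h1, h2, h3⟩ | ⟨h1, h2, h3⟩ | ⟨h1, h2, h3⟩
  · exact absurd h2 hnb
  · rw [h] at h1; exact absurd (Option.some_injective _ h1) hss
  · rw [h1]; exact h

theorem swap_keep2 (hss : s ≠ s') (h : S α = some s')
    (hnb : ¬∃ β, Neighbor α β ∧ S β = some s) : swapVal s s' S α = some s' := by
  rcases swapVal_cases s s' S α with ⟨h1, h2, h3⟩ | ⟨h1, h2, h3⟩ | ⟨h1, h2, h3⟩
  · rw [h] at h1; exact absurd (Option.some_injective _ h1).symm hss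
  · exact absurd h2 hnb
  · rw [h1]; exact h

theorem swap_G1 (hss : s ≠ s') (h : swapVal s s' S α = some s) :
    (S α = some s ∧ ¬∃ β, Neighbor α β ∧ S β = some s')
  ∨ (S α = some s' ∧ ∃ β, Neighbor α β ∧ S β = some s) := by
  rcases swapVal_cases s s' S α with ⟨h1, h2, h3⟩ | ⟨h1, h2, h3⟩ | ⟨h1, h2, h3⟩
  · rw [h] at h3; exact absurd (Option.some_injective _ h3) hss
  · exact Or.inr ⟨h1, h2⟩
  · rw [h] at h1
    exact Or.inl ⟨h1.symm, fun hnb => h2 ⟨h1.symm, hnb⟩⟩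

theorem swap_G2 (hss : s ≠ s') (h : swapVal s s' S α = some s') :
    (S α = some s' ∧ ¬∃ β, Neighbor α β ∧ S β = some s)
  ∨ (S α = some s ∧ ∃ β, Neighbor α β ∧ S β = some s') := by
  rcases swapVal_cases s s' S α with ⟨h1, h2, h3⟩ | ⟨h1, h2, h3⟩ | ⟨h1, h2, h3⟩
  · exact Or.inr ⟨h1, h2⟩
  · rw [h] at h3; exact absurd (Option.some_injective _ h3).symm hss
  · rw [h] at h1
    exact Or.inl ⟨h1.symm, fun hnb => h3 ⟨h1.symm, hnb⟩⟩

theorem swapVal_invol (hss : s ≠ s')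
    (h1 : ∀ α β : L, Neighbor α β → S α = some s → S β ≠ some s)
    (h2 : ∀ α β : L, Neighbor α β → S α = some s' → S β ≠ some s') :
    swapVal s s' (swapVal s s' S) = S := by
  funext α
  by_cases hs : S α = some s
  · by_cases hnb : ∃ β, Neighbor α β ∧ S β = some s'
    · obtain ⟨β₀, hb, hb'⟩ := hnb
      have e1 : swapVal s s' S α = some s' := swap_b1 hss hs ⟨β₀, hb, hb'⟩
      have eβ : swapVal s s' S β₀ = some s := swap_b2 hss hb' ⟨α, hb.symm, hs⟩
      rw [swap_b2 hss e1 ⟨β₀, hb, eβ⟩, hs]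
    · have e1 : swapVal s s' S α = some s := swap_keep1 hss hs hnb
      have hnb' : ¬∃ β, Neighbor α β ∧ swapVal s s' S β = some s' := by
        rintro ⟨β, hb, hβ⟩
        rcases swap_G2 hss hβ with ⟨hβo, _⟩ | ⟨hβo, _⟩
        · exact hnb ⟨β, hb, hβo⟩
        · exact h1 α β hb hs hβo
      rw [swap_keep1 hss e1 hnb', hs]
  · by_cases hs' : S α = some s'
    · by_cases hnb : ∃ β, Neighbor α β ∧ S β = some s
      · obtain ⟨β₀, hb, hb'⟩ := hnb
        have e1 : swapVal s s' S α = some s := swap_b2 hss hs' ⟨β₀, hb, hb'⟩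
        have eβ : swapVal s s' S β₀ = some s' := swap_b1 hss hb' ⟨α, hb.symm, hs'⟩
        rw [swap_b1 hss e1 ⟨β₀, hb, eβ⟩, hs']
      · have e1 : swapVal s s' S α = some s' := swap_keep2 hss hs' hnb
        have hnb' : ¬∃ β, Neighbor α β ∧ swapVal s s' S β = some s := by
          rintro ⟨β, hb, hβ⟩
          rcases swap_G1 hss hβ with ⟨hβo, _⟩ | ⟨hβo, _⟩
          · exact hnb ⟨β, hb, hβo⟩
          · exact h2 α β hb hs' hβo
        rw [swap_keep2 hss e1 hnb', hs']
    · have e1 : swapVal s s' S α = S α := swapVal_eq_of_ne hs hs'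
      rw [swapVal_eq_of_ne (fun hc => hs (e1 ▸ hc)) (fun hc => hs' (e1 ▸ hc)), e1]

end Invol

/-- A reverse-slide state has no two neighboring equal current values / dots,
so the swap is an involution. -/
theorem rev_state_invol {lam nu Chat : Finset L} {a b w : ℤ} {S : L → Option ZDot}
    (I : RevInv lam nu Chat a b w S) :
    swapVal (Sum.inl w) dt (swapVal (Sum.inl w) dt S) = S := by
  apply swapVal_invol (by simp [dt])
  · intro α β hnb hα hβ
    rcases hnb with hc | hc
    · exact absurd (I.inc hc.1 hα hβ) (by omega)
    · exact absurd (I.inc hc.1 hβ hα) (by omega)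
  · intro α β hnb hα hβ
    rcases hnb with hc | hc
    · rcases I.above hα hc.1 with h | ⟨y, hy, _⟩
      · rw [hβ] at h; simp at h
      · rw [hβ] at hy; simp [dt] at hy
    · rcases I.above hβ hc.1 with h | ⟨y, hy, _⟩
      · rw [hα] at h; simp at h
      · rw [hα] at hy; simp [dt] at hy

theorem rev_unwind {lam nu Chat : Finset L} {a b : ℤ} {S0 : L → Option ZDot}
    (hIk : ∀ k : ℕ, (k : ℤ) ≤ b - a + 1 →
      RevInv lam nu Chat a b (b - k) (swapDown b k S0)) :
    ∀ j : ℕ, (j : ℤ) ≤ b - a + 1 →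
      swapUp a j (swapDown b (b - a + 1).toNat S0) =
        swapDown b ((b - a + 1).toNat - j) S0 := by
  intro j
  induction j with
  | zero => intro _; rfl
  | succ j ih =>
    intro hj
    have hcast : ((j + 1 : ℕ) : ℤ) = (j : ℤ) + 1 := by push_cast; ring
    have hab : a ≤ b := by omega
    have hn : (((b - a + 1).toNat : ℕ) : ℤ) = b - a + 1 := Int.toNat_of_nonneg (by omega)
    set n := (b - a + 1).toNat with hndef
    have hjn : j + 1 ≤ n := by omega
    set m := n - (j + 1) with hmdef
    have hm : ((m : ℕ) : ℤ) = b - a - j := by omega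
    have hsplit : n - j = m + 1 := by omega
    have e0 : swapUp a (j + 1) (swapDown b n S0) =
        swapVal (Sum.inl (a + (j : ℤ))) (Sum.inr ()) (swapUp a j (swapDown b n S0)) := rfl
    have e1 : swapDown b (n - j) S0 =
        swapVal (Sum.inl (b - (m : ℤ))) (Sum.inr ()) (swapDown b m S0) := by
      rw [hsplit]; rfl
    have hbm : b - (m : ℤ) = a + (j : ℤ) := by omega
    have I := hIk m (by omega)
    have hw : b - (m : ℤ) = b - (m : ℤ) := rfl
    have invol := rev_state_invol (w := b - (m : ℤ)) I
    rw [e0, ih (by omega), e1, hbm] at *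
    rw [hbm] at invol
    exact invol

end JDTAux

namespace JDTAux

set_option linter.unusedSectionVars false

variable {L : Type} [PartialOrder L]

theorem restrictInt_toDotted (T : L → Option ℤ) : restrictInt (toDotted T) = T := by
  funext α
  cases hTα : T α <;> simp [restrictInt, toDotted, hTα]

theorem reverse_slide_spec {lam nu Chat : Finset L} {T : L → Option ℤ} {a b : ℤ}
    (hpair : IsSkewPair lam nu) (hsh : shapeOf T = (nu : Set L) \ (lam : Set L))
    (hinc : Increasing T) (hval : ValuesIn T a b)
    (hC : ∀ c ∈ Chat, c ∉ nu ∧ ∀ d : L, d ∉ nu → ¬ d < c) :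
    Increasing (restrictInt (swapDown b (b - a + 1).toNat (addDots Chat (toDotted T)))) ∧
    IsForwardSlide (restrictInt (swapDown b (b - a + 1).toNat (addDots Chat (toDotted T)))) T := by
  obtain ⟨hlamS, hnuS, hsub⟩ := hpair
  have ctx : RevCtx lam nu Chat := ⟨hlamS, hnuS, hsub, hC⟩
  have hT : ∀ α : L, T α ≠ none ↔ (α ∈ nu ∧ α ∉ lam) := by
    intro α
    have := Set.ext_iff.mp hsh α
    simpa [shapeOf] using this
  set S0 := addDots Chat (toDotted T) with hS0
  set n := (b - a + 1).toNat with hn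
  set Sf := swapDown b n S0 with hSf
  by_cases hab : a ≤ b
  · have hnz : ((n : ℕ) : ℤ) = b - a + 1 := by rw [hn]; exact Int.toNat_of_nonneg (by omega)
    have hIk : ∀ k : ℕ, (k : ℤ) ≤ b - a + 1 →
        RevInv lam nu Chat a b (b - k) (swapDown b k S0) := by
      intro k hk
      exact rev_iter ctx (rev_initial ctx hsh hinc hval) k (by omega)
    have I : RevInv lam nu Chat a b (a - 1) Sf := by
      have h := hIk n (by omega)
      rw [show b - ((n : ℕ) : ℤ) = a - 1 by omega] at h
      exact h
    have hbelow : ∀ ⦃α β : L⦄, Sf α = some dt → β < α → Sf β = none := by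
      intro α β hα hba
      rcases I.below hα hba with h | ⟨y, hy, hy'⟩
      · exact h
      · exact absurd (I.ge_a hy) (by omega)
    set D := (nu ∪ Chat).filter (fun α => Sf α = some dt) with hD
    have hmemD : ∀ {α : L}, α ∈ D ↔ (α ∈ nu ∪ Chat) ∧ Sf α = some dt := fun {α} => by
      rw [hD, Finset.mem_filter]
    have hDdot : ∀ {α : L}, Sf α = some dt → α ∈ D := by
      intro α h
      refine hmemD.mpr ⟨?_, h⟩
      rcases I.mem_or (by rw [h]; simp) with h1 | h1
      · exact Finset.mem_union_left _ h1
      · exact Finset.mem_union_right _ h1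
    have hInc : Increasing (restrictInt Sf) := by
      intro α β hlt x y hx hy
      exact I.inc hlt (restrictInt_eq_some_iff.mp hx) (restrictInt_eq_some_iff.mp hy)
    refine ⟨hInc, lam ∪ D, nu ∪ Chat, D, a, b, ⟨?_, ?_, ?_⟩, ?_, ?_, ?_, ?_⟩
    · -- lam ∪ D straight
      intro x hx y hyx
      rw [Finset.mem_union] at hx ⊢
      rcases hx with hx | hx
      · exact Or.inl (hlamS x hx y hyx)
      · rcases eq_or_lt_of_le hyx with rfl | hylt
        · exact Or.inr hx
        · have hynone : Sf y = none := hbelow (hmemD.mp hx).2 hylt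
          have hynu : y ∈ nu := ctx.below_mem_nu hylt (Finset.mem_union.mp (hmemD.mp hx).1)
          left
          by_contra hyl
          exact ((I.supp y).mpr (Or.inl ⟨hynu, hyl⟩)) hynone
    · -- nu ∪ Chat straight
      intro x hx y hyx
      rcases eq_or_lt_of_le hyx with rfl | hylt
      · exact hx
      · exact Finset.mem_union_left _ (ctx.below_mem_nu hylt (Finset.mem_union.mp hx))
    · -- subset
      intro x hx
      rcases Finset.mem_union.mp hx with h | h
      · exact Finset.mem_union_left _ (hsub h)
      · exact Finset.filter_subset _ _ h
    · -- shape
      ext α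
      simp only [shapeOf, Set.mem_setOf_eq, Set.mem_diff, Finset.coe_union, Set.mem_union,
        Finset.mem_coe]
      rw [restrictInt_ne_none_iff]
      constructor
      · rintro ⟨x, hx⟩
        have hne : Sf α ≠ none := by rw [hx]; simp
        have hnl : α ∉ lam := by
          rcases (I.supp α).mp hne with ⟨_, h⟩ | h
          · exact h
          · exact fun hl => (ctx.cmin α h).1 (hsub hl)
        refine ⟨?_, ?_⟩
        · rcases I.mem_or hne with h | h
          exacts [Or.inl h, Or.inr h]
        · rintro (h | h)
          · exact hnl h
          · rw [(hmemD.mp h).2] at hx; simp [dt] at hx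
      · rintro ⟨hor, hnn⟩
        push_neg at hnn
        have hne : Sf α ≠ none := by
          apply (I.supp α).mpr
          rcases hor with h | h
          · exact Or.inl ⟨h, hnn.1⟩
          · exact Or.inr h
        rcases zdot_cases (Sf α) with h | ⟨x, h⟩ | h
        · exact absurd h hne
        · exact ⟨x, h⟩
        · exact absurd (hDdot h) hnn.2
    · -- values
      intro α x hx
      have h := restrictInt_eq_some_iff.mp hx
      exact ⟨I.ge_a h, I.le_b h⟩
    · -- C condition
      intro c hc
      refine ⟨Finset.mem_union_right _ hc, ?_⟩
      intro d hd hcd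
      rcases Finset.mem_union.mp hd with h | h
      · have hclam : c ∈ lam := hlamS d h c hcd.le
        have hne : Sf c ≠ none := by rw [(hmemD.mp hc).2]; simp
        rcases (I.supp c).mp hne with ⟨_, h2⟩ | h2
        · exact h2 hclam
        · exact (ctx.cmin c h2).1 (hsub hclam)
      · have h1 := (hmemD.mp hc).2
        have h2 := (hmemD.mp h).2
        rcases I.above h1 hcd with h3 | ⟨y, hy, _⟩
        · rw [h2] at h3; simp at h3
        · rw [h2] at hy; simp [dt] at hy
    · -- undoing the slide
      have eDots : addDots D (toDotted (restrictInt Sf)) = Sf := by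
        funext α
        rcases zdot_cases (Sf α) with h | ⟨x, h⟩ | h
        · have hnD : α ∉ D := fun hα => by rw [(hmemD.mp hα).2] at h; simp at h
          simp [addDots, hnD, toDotted, restrictInt, h]
        · have hnD : α ∉ D := fun hα => by rw [(hmemD.mp hα).2] at h; simp [dt] at h
          simp [addDots, hnD, toDotted, restrictInt, h]
        · simp [addDots, hDdot h, h, dt]
      have eUnwind : swapUp a n Sf = S0 := by
        have h := rev_unwind hIk n (by omega)
        rw [← hn, Nat.sub_self] at h
        exact h
      have eS0 : restrictInt S0 = T := by
        funext α
        by_cases h : α ∈ Chat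
        · have hTn : T α = none := by
            by_contra hc
            exact (hC α h).1 ((hT α).mp hc).1
          simp [restrictInt, hS0, addDots, h, dt, hTn]
        · cases hTα : T α <;> simp [restrictInt, hS0, addDots, h, toDotted, hTα]
      rw [eDots, ← hn, eUnwind, eS0]
  · -- degenerate case b < a
    have hn0 : n = 0 := by rw [hn]; omega
    have hTnone : ∀ α : L, T α = none := by
      intro α
      cases hTα : T α with
      | none => rfl
      | some x => exact absurd (hval α x hTα) (by omega)
    have hRT : restrictInt Sf = T := by
      funext α
      rw [hSf, hn0]
      show restrictInt S0 α = T α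
      by_cases h : α ∈ Chat <;>
        simp [restrictInt, hS0, addDots, h, dt, toDotted, hTnone α]
    rw [hRT]
    refine ⟨hinc, lam, nu, ∅, a, b, ⟨hlamS, hnuS, hsub⟩, hsh, hval, by simp, ?_⟩
    have h1 : addDots (∅ : Finset L) (toDotted T) = toDotted T := by
      funext α; simp [addDots]
    rw [h1, show (b - a + 1).toNat = 0 by omega]
    show T = restrictInt (toDotted T)
    rw [restrictInt_toDotted]

end JDTAux

namespace JDTAux

set_option linter.unusedSectionVars false

variable {L : Type} [PartialOrder L]

theorem exists_bounds {T : L → Option ℤ} {nu : Finset L}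
    (h : ∀ α : L, T α ≠ none → α ∈ nu) : ∃ a b : ℤ, ValuesIn T a b := by
  classical
  set V := nu.image (fun α => (T α).getD 0) with hV
  by_cases hne : V.Nonempty
  · refine ⟨V.min' hne, V.max' hne, ?_⟩
    intro α x hx
    have hmem : (T α).getD 0 ∈ V :=
      Finset.mem_image_of_mem _ (h α (by rw [hx]; simp))
    rw [hx] at hmem
    simp only [Option.getD_some] at hmem
    exact ⟨V.min'_le _ hmem, V.le_max' _ hmem⟩
  · refine ⟨0, 0, ?_⟩
    intro α x hx
    exact absurd ⟨_, Finset.mem_image_of_mem _ (h α (by rw [hx]; simp))⟩ hne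

theorem exists_rectification_aux :
    ∀ n : ℕ, ∀ (T : L → Option ℤ) (lam nu : Finset L), lam.card ≤ n →
      Increasing T → IsSkewPair lam nu → shapeOf T = (nu : Set L) \ (lam : Set L) →
      ∃ U, Relation.ReflTransGen IsForwardSlide T U ∧ HasStraightShape U := by
  intro n
  induction n with
  | zero =>
    intro T lam nu hcard hinc hpair hsh
    have hl : lam = ∅ := Finset.card_eq_zero.mp (le_antisymm hcard (Nat.zero_le _))
    subst hl
    exact ⟨T, .refl, ⟨nu, hpair.2.1, by simpa using hsh⟩⟩
  | succ n ih =>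
    intro T lam nu hcard hinc hpair hsh
    by_cases hlam : lam = ∅
    · subst hlam
      exact ⟨T, .refl, ⟨nu, hpair.2.1, by simpa using hsh⟩⟩
    · have hne : lam.Nonempty := Finset.nonempty_iff_ne_empty.mpr hlam
      set C := lam.filter (fun c => ∀ d ∈ lam, ¬ c < d) with hCdef
      have hCmax : ∀ c ∈ C, c ∈ lam ∧ ∀ d ∈ lam, ¬ c < d := by
        intro c hc; rw [hCdef, Finset.mem_filter] at hc; exact hc
      have hCsub : C ⊆ lam := by rw [hCdef]; exact Finset.filter_subset _ _
      have hCne : C.Nonempty := by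
        obtain ⟨m, hm, hmax⟩ : ∃ m ∈ lam, ∀ x ∈ lam, ¬m < x := by
          obtain ⟨m, hm⟩ := Finset.exists_maximal hne; exact ⟨m, hm.1, fun x hx => hm.not_gt hx⟩
        exact ⟨m, by rw [hCdef, Finset.mem_filter]; exact ⟨hm, hmax⟩⟩
      obtain ⟨a, b, hval⟩ := exists_bounds (T := T) (nu := nu) (fun α hα => by
        have h := Set.ext_iff.mp hsh α
        simp only [shapeOf, Set.mem_setOf_eq, Set.mem_diff, Finset.mem_coe] at h
        exact (h.mp hα).1)
      obtain ⟨lam', nu', hpair', hsub', hinc', hsh'⟩ :=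
        forward_slide_spec hpair hsh hinc hval hCmax
      have hstep : IsForwardSlide T
          (restrictInt (swapUp a (b - a + 1).toNat (addDots C (toDotted T)))) :=
        ⟨lam, nu, C, a, b, hpair, hsh, hval, hCmax, rfl⟩
      have hcard' : lam'.card ≤ n := by
        have h1 : lam'.card ≤ (lam \ C).card := Finset.card_le_card hsub'
        have h2 : (lam \ C).card < lam.card :=
          Finset.card_lt_card (Finset.sdiff_ssubset hCsub hCne)
        omega
      obtain ⟨U, hchain, hstraight⟩ := ih _ lam' nu' hcard' hinc' hpair' hsh'
      exact ⟨U, .head hstep hchain, hstraight⟩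

theorem straight_skew {X : L → Option ℤ} (h : HasStraightShape X) : HasSkewShape X := by
  obtain ⟨mu, hmuS, hXsh⟩ := h
  refine ⟨∅, mu, ⟨?_, hmuS, Finset.empty_subset _⟩, by simpa using hXsh⟩
  intro a ha
  exact absurd ha (by simp)

end JDTAux

theorem urt_unique_straight_in_class' {L : Type} [PartialOrder L]
    (U : L → Option ℤ) (hU : IsURT U) :
    ∀ T : L → Option ℤ, Increasing T → HasStraightShape T → JdtEquiv U T → T = U := by
  intro T hTinc hTstraight hJ
  have key : Increasing T ∧ HasSkewShape T ∧ RectifiesTo T U := by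
    clear hTinc hTstraight
    induction hJ with
    | refl =>
      exact ⟨hU.2.1, JDTAux.straight_skew hU.1, .refl, hU.1⟩
    | @tail Y Z hchain hstep ih =>
      obtain ⟨ihinc, ihskew, ihrect⟩ := ih
      rcases hstep with hfwd | hrev
      · obtain ⟨lam, nu, C, a, b, hpair, hsh, hval, hCc, hYeq⟩ := id hfwd
        obtain ⟨lam', nu', hpair', hsub', hinc', hsh'⟩ :=
          JDTAux.forward_slide_spec hpair hsh ihinc hval hCc
        rw [← hYeq] at hinc' hsh'
        have hskewY : HasSkewShape Z := ⟨lam', nu', hpair', hsh'⟩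
        obtain ⟨V, hchainV, hVstraight⟩ :=
          JDTAux.exists_rectification_aux lam'.card _ lam' nu' le_rfl hinc' hpair' hsh'
        have hrectXV : RectifiesTo Y V := ⟨.head hfwd hchainV, hVstraight⟩
        have hVU : V = U := hU.2.2 Y ⟨ihskew, ihinc⟩ ihrect V hrectXV
        exact ⟨hinc', hskewY, hVU ▸ hchainV, hU.1⟩
      · obtain ⟨lam, nu, Chat, a, b, hpair, hsh, hval, hCc, hYeq⟩ := id hrev
        have hspec := JDTAux.reverse_slide_spec hpair hsh ihinc hval hCc
        rw [← hYeq] at hspec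
        obtain ⟨hincY, hfwdYX⟩ := hspec
        have hskewY : HasSkewShape Z := by
          obtain ⟨l2, n2, C2, a2, b2, hp2, hsh2, _⟩ := hfwdYX
          exact ⟨l2, n2, hp2, hsh2⟩
        exact ⟨hincY, hskewY, .head hfwdYX ihrect.1, hU.1⟩
  obtain ⟨hTi, hTskew, hTrect⟩ := key
  exact hU.2.2 T ⟨hTskew, hTi⟩ hTrect T ⟨.refl, hTstraight⟩

theorem urt_unique_straight_in_class {L : Type} [PartialOrder L]
    (hmin : {x : L | ∀ y : L, ¬ y < x}.Finite)
    (hcov : ∀ x : L, {y : L | x ⋖ y}.Finite)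
    (U : L → Option ℤ) (hU : IsURT U) :
    ∀ T : L → Option ℤ, Increasing T → HasStraightShape T → JdtEquiv U T → T = U := by
  exact urt_unique_straight_in_class' U hU
end
end

section
/- Let T be a weakly increasing tableau of hook-closed shape in ℕ×ℕ. Then all reading words of T are pairwise K-Knuth equivalent. -/
open Classical

noncomputable section

/-- The basic K-Knuth relations. -/
inductive KKnuthStep : List ℤ → List ℤ → Prop
  | dup (u v : List ℤ) (a : ℤ) : KKnuthStep (u ++ [a, a] ++ v) (u ++ [a] ++ v)
  | aba (u v : List ℤ) (a b : ℤ) : KKnuthStep (u ++ [a, b, a] ++ v) (u ++ [b, a, b] ++ v)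
  | acb (u v : List ℤ) (a b c : ℤ) (h1 : b < a) (h2 : a < c) :
      KKnuthStep (u ++ [a, b, c] ++ v) (u ++ [a, c, b] ++ v)
  | bac (u v : List ℤ) (a b c : ℤ) (h1 : a < c) (h2 : c < b) :
      KKnuthStep (u ++ [a, b, c] ++ v) (u ++ [b, a, c] ++ v)

/-- K-Knuth equivalence: the symmetric transitive closure of the basic relations. -/
def KKnuth : List ℤ → List ℤ → Prop := Relation.EqvGen KKnuthStep

/-- A hook-closed shape in `ℕ × ℕ`. -/
def HookClosed (θ : Finset (ℕ × ℕ)) : Prop :=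
  ∀ p ∈ θ, ∀ q ∈ θ, p.1 ≤ q.1 → p.2 ≤ q.2 →
    (∀ c : ℕ, p.2 ≤ c → c ≤ q.2 → (p.1, c) ∈ θ) ∧
    (∀ r : ℕ, p.1 ≤ r → r ≤ q.1 → (r, q.2) ∈ θ)

/-- A weakly increasing tableau of shape `θ`: rows weakly increase from left to
right and columns weakly increase from top to bottom. -/
def WeaklyIncr (θ : Finset (ℕ × ℕ)) (T : ℕ × ℕ → ℤ) : Prop :=
  ∀ p ∈ θ, ∀ q ∈ θ, ((p.1 = q.1 ∧ p.2 ≤ q.2) ∨ (p.2 = q.2 ∧ p.1 ≤ q.1)) → T p ≤ T q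

/-- `w` is a reading word of the tableau `T` of shape `θ`. -/
def IsReadingWord (θ : Finset (ℕ × ℕ)) (T : ℕ × ℕ → ℤ) (w : List ℤ) : Prop :=
  ∃ ord : List (ℕ × ℕ), ord.Nodup ∧ (∀ p : ℕ × ℕ, p ∈ ord ↔ p ∈ θ) ∧ w = ord.map T ∧
    (∀ p ∈ θ, ∀ q ∈ θ, p ≠ q → q.1 ≤ p.1 → p.2 ≤ q.2 →
      ord.idxOf p < ord.idxOf q) ∧
    (∀ p ∈ θ, 1 ≤ p.1 → (p.1 - 1, p.2) ∈ θ → T (p.1 - 1, p.2) = T p →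
      ∀ q ∈ θ, q.1 < p.1 → ord.idxOf p < ord.idxOf q) ∧
    (∀ p ∈ θ, (p.1, p.2 + 1) ∈ θ → T (p.1, p.2 + 1) = T p →
      ∀ q ∈ θ, p.2 < q.2 → ord.idxOf p < ord.idxOf q)


lemma kstep_cons {u v : List ℤ} (x : ℤ) (h : KKnuthStep u v) : KKnuthStep (x :: u) (x :: v) := by
  cases h with
  | dup u v a => have := KKnuthStep.dup (x :: u) v a; simpa using this
  | aba u v a b => have := KKnuthStep.aba (x :: u) v a b; simpa using this
  | acb u v a b c h1 h2 => have := KKnuthStep.acb (x :: u) v a b c h1 h2; simpa using this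
  | bac u v a b c h1 h2 => have := KKnuthStep.bac (x :: u) v a b c h1 h2; simpa using this

lemma kknuth_cons {u v : List ℤ} (x : ℤ) (h : KKnuth u v) : KKnuth (x :: u) (x :: v) := by
  induction h with
  | rel a b hab => exact Relation.EqvGen.rel _ _ (kstep_cons x hab)
  | refl a => exact Relation.EqvGen.refl _
  | symm a b _ ih => exact Relation.EqvGen.symm _ _ ih
  | trans a b c _ _ ih1 ih2 => exact Relation.EqvGen.trans _ _ _ ih1 ih2

lemma idx_self (p : ℕ × ℕ) (l : List (ℕ × ℕ)) : (p :: l).idxOf p = 0 := by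
  simp [List.idxOf_cons]

lemma idx_ne {p q : ℕ × ℕ} (l : List (ℕ × ℕ)) (h : p ≠ q) :
    (q :: l).idxOf p = l.idxOf p + 1 := by
  have hb : (q == p) = false := beq_eq_false_iff_ne.2 (Ne.symm h)
  simp [List.idxOf_cons, hb]

lemma erase_cons_ne {q p : ℕ × ℕ} (l : List (ℕ × ℕ)) (h : q ≠ p) :
    (q :: l).erase p = q :: l.erase p :=
  List.erase_cons_tail (by simp [h])

/-- The precedence constraints defining reading orders. -/
def Prec (θ : Finset (ℕ × ℕ)) (T : ℕ × ℕ → ℤ) (p q : ℕ × ℕ) : Prop :=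
  p ∈ θ ∧ q ∈ θ ∧
    ((p ≠ q ∧ q.1 ≤ p.1 ∧ p.2 ≤ q.2) ∨
     (1 ≤ p.1 ∧ (p.1 - 1, p.2) ∈ θ ∧ T (p.1 - 1, p.2) = T p ∧ q.1 < p.1) ∨
     ((p.1, p.2 + 1) ∈ θ ∧ T (p.1, p.2 + 1) = T p ∧ p.2 < q.2))

/-- Reading orders. -/
def IsRO (θ : Finset (ℕ × ℕ)) (T : ℕ × ℕ → ℤ) (ord : List (ℕ × ℕ)) : Prop :=
  ord.Nodup ∧ (∀ p : ℕ × ℕ, p ∈ ord ↔ p ∈ θ) ∧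
    ∀ p q : ℕ × ℕ, Prec θ T p q → ord.idxOf p < ord.idxOf q

def Firstable (θ : Finset (ℕ × ℕ)) (T : ℕ × ℕ → ℤ) (s : ℕ × ℕ) : Prop :=
  s ∈ θ ∧ ∀ y : ℕ × ℕ, ¬ Prec θ T y s

lemma prec_mono_erase {θ : Finset (ℕ × ℕ)} {T : ℕ × ℕ → ℤ} {s p q : ℕ × ℕ}
    (h : Prec (θ.erase s) T p q) : Prec θ T p q := by
  obtain ⟨hp, hq, hd⟩ := h
  refine ⟨Finset.mem_of_mem_erase hp, Finset.mem_of_mem_erase hq, ?_⟩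
  rcases hd with h | h | h
  · exact Or.inl h
  · exact Or.inr (Or.inl ⟨h.1, Finset.mem_of_mem_erase h.2.1, h.2.2⟩)
  · exact Or.inr (Or.inr ⟨Finset.mem_of_mem_erase h.1, h.2⟩)

lemma before_erase {l : List (ℕ × ℕ)} {s p q : ℕ × ℕ} (hp : p ≠ s) (hq : q ≠ s)
    (h : l.idxOf p < l.idxOf q) : (l.erase s).idxOf p < (l.erase s).idxOf q := by
  induction l with
  | nil => simpa using h
  | cons x t ih =>
    by_cases hxs : x = s
    · subst hxs
      rw [List.erase_cons_head]
      rw [idx_ne t hp, idx_ne t hq] at h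
      omega
    · rw [erase_cons_ne t hxs]
      by_cases hpx : p = x
      · subst hpx
        rw [idx_self]
        have hqp : q ≠ p := by
          intro h'; subst h'; omega
        rw [idx_ne _ hqp]
        omega
      · have hqx : q ≠ x := by
          intro h'; subst h'
          rw [idx_self, idx_ne t hpx] at h
          omega
        rw [idx_ne t hpx, idx_ne t hqx] at h
        rw [idx_ne _ hpx, idx_ne _ hqx]
        have := ih (by omega)
        omega

/-- Erasing any box from a reading order yields a reading order of the erased shape. -/
lemma isRO_erase {θ : Finset (ℕ × ℕ)} {T : ℕ × ℕ → ℤ} {o : List (ℕ × ℕ)} (s : ℕ × ℕ)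
    (ho : IsRO θ T o) : IsRO (θ.erase s) T (o.erase s) := by
  obtain ⟨hnd, hmem, hord⟩ := ho
  refine ⟨hnd.erase s, ?_, ?_⟩
  · intro p
    rw [hnd.mem_erase_iff, Finset.mem_erase, hmem]
  · intro p q hpq
    have hp : p ≠ s := (Finset.mem_erase.1 hpq.1).1
    have hq : q ≠ s := (Finset.mem_erase.1 hpq.2.1).1
    exact before_erase hp hq (hord p q (prec_mono_erase hpq))

/-- Consing a firstable box onto a reading order of the erased shape. -/
lemma isRO_cons {θ : Finset (ℕ × ℕ)} {T : ℕ × ℕ → ℤ} {o : List (ℕ × ℕ)} {s : ℕ × ℕ}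
    (hs : Firstable θ T s) (ho : IsRO (θ.erase s) T o) : IsRO θ T (s :: o) := by
  obtain ⟨hnd, hmem, hord⟩ := ho
  have hsno : s ∉ o := fun h => (Finset.mem_erase.1 ((hmem s).1 h)).1 rfl
  refine ⟨List.nodup_cons.2 ⟨hsno, hnd⟩, ?_, ?_⟩
  · intro p
    simp only [List.mem_cons, hmem, Finset.mem_erase]
    constructor
    · rintro (rfl | ⟨_, h⟩)
      · exact hs.1
      · exact h
    · intro hp
      by_cases hps : p = s
      · exact Or.inl hps
      · exact Or.inr ⟨hps, hp⟩
  · intro p q hpq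
    by_cases hqs : q = s
    · subst hqs; exact absurd hpq (hs.2 p)
    · have hq0 : (s :: o).idxOf q = o.idxOf q + 1 := idx_ne _ hqs
      by_cases hps : p = s
      · subst hps
        rw [idx_self, hq0]; omega
      · have hp0 : (s :: o).idxOf p = o.idxOf p + 1 := idx_ne _ hps
        rw [hp0, hq0]
        have hprec : Prec (θ.erase s) T p q := by
          obtain ⟨hpθ, hqθ, hd⟩ := hpq
          refine ⟨Finset.mem_erase.2 ⟨hps, hpθ⟩, Finset.mem_erase.2 ⟨hqs, hqθ⟩, ?_⟩
          rcases hd with h | h | h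
          · exact Or.inl h
          · refine Or.inr (Or.inl ⟨h.1, Finset.mem_erase.2 ⟨fun heq => ?_, h.2.1⟩, h.2.2⟩)
            apply hs.2 p
            subst heq
            refine ⟨hpθ, hs.1, Or.inl ⟨fun h' => ?_, by simp, by simp⟩⟩
            have := congrArg Prod.fst h'
            simp only at this
            omega
          · refine Or.inr (Or.inr ⟨Finset.mem_erase.2 ⟨fun heq => ?_, h.1⟩, h.2⟩)
            apply hs.2 p
            subst heq
            refine ⟨hpθ, hs.1, Or.inl ⟨fun h' => ?_, by simp, by simp⟩⟩
            have := congrArg Prod.snd h'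
            simp only at this
            omega
        have := hord p q hprec
        omega

lemma head_firstable {θ : Finset (ℕ × ℕ)} {T : ℕ × ℕ → ℤ} {h : ℕ × ℕ} {t : List (ℕ × ℕ)}
    (ho : IsRO θ T (h :: t)) : Firstable θ T h := by
  refine ⟨(ho.2.1 h).1 (by simp), fun y hy => ?_⟩
  have := ho.2.2 y h hy
  rw [idx_self] at this
  omega

lemma tail_isRO {θ : Finset (ℕ × ℕ)} {T : ℕ × ℕ → ℤ} {h : ℕ × ℕ} {t : List (ℕ × ℕ)}
    (ho : IsRO θ T (h :: t)) : IsRO (θ.erase h) T t := by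
  have := isRO_erase h ho
  rwa [List.erase_cons_head] at this

lemma firstable_mono {θ : Finset (ℕ × ℕ)} {T : ℕ × ℕ → ℤ} {s x : ℕ × ℕ}
    (hs : Firstable θ T s) (hx : s ≠ x) : Firstable (θ.erase x) T s :=
  ⟨Finset.mem_erase.2 ⟨hx, hs.1⟩, fun y hy => hs.2 y (prec_mono_erase hy)⟩

lemma hookClosed_erase {θ : Finset (ℕ × ℕ)} {T : ℕ × ℕ → ℤ} {s : ℕ × ℕ}
    (hHC : HookClosed θ) (hs : Firstable θ T s) : HookClosed (θ.erase s) := by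
  intro p hp q hq h1 h2
  have hp' := Finset.mem_of_mem_erase hp
  have hq' := Finset.mem_of_mem_erase hq
  obtain ⟨hrow, hcol⟩ := hHC p hp' q hq' h1 h2
  constructor
  · intro c hc1 hc2
    refine Finset.mem_erase.2 ⟨fun heq => ?_, hrow c hc1 hc2⟩
    apply hs.2 p
    subst heq
    exact ⟨hp', hs.1, Or.inl ⟨(Finset.mem_erase.1 hp).1, le_refl _, hc1⟩⟩
  · intro r hr1 hr2
    refine Finset.mem_erase.2 ⟨fun heq => ?_, hcol r hr1 hr2⟩
    apply hs.2 q
    subst heq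
    exact ⟨hq', hs.1, Or.inl ⟨(Finset.mem_erase.1 hq).1, hr2, le_refl _⟩⟩

lemma weaklyIncr_erase {θ : Finset (ℕ × ℕ)} {T : ℕ × ℕ → ℤ} {s : ℕ × ℕ}
    (hWI : WeaklyIncr θ T) : WeaklyIncr (θ.erase s) T :=
  fun p hp q hq h => hWI p (Finset.mem_of_mem_erase hp) q (Finset.mem_of_mem_erase hq) h

lemma key {θ : Finset (ℕ × ℕ)} {T : ℕ × ℕ → ℤ} {P Q : ℕ × ℕ}
    (hHC : HookClosed θ) (hWI : WeaklyIncr θ T)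
    (hFP : Firstable θ T P) (hFQ : Firstable θ T Q)
    (h1 : P.1 < Q.1) (h2 : P.2 < Q.2)
    {o : List (ℕ × ℕ)} (ho : IsRO θ T o) :
    ∃ r : List (ℕ × ℕ), IsRO θ T (P :: Q :: r) ∧ IsRO θ T (Q :: P :: r) ∧
      KKnuthStep ((P :: Q :: r).map T) ((Q :: P :: r).map T) := by
  have hP : P ∈ θ := hFP.1
  have hQ : Q ∈ θ := hFQ.1
  have hPQ : P ≠ Q := by
    intro h; rw [h] at h1; omega
  obtain ⟨hrow, hcol⟩ := hHC P hP Q hQ (le_of_lt h1) (le_of_lt h2)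
  have hQm : ((Q.1 - 1 : ℕ), Q.2) ∈ θ := hcol (Q.1 - 1) (by omega) (by omega)
  have hzb : T (Q.1 - 1, Q.2) ≤ T Q := hWI _ hQm Q hQ (Or.inr ⟨rfl, by simp⟩)
  have hzb' : T (Q.1 - 1, Q.2) ≠ T Q := by
    intro heq
    exact hFP.2 Q ⟨hQ, hP, Or.inr (Or.inl ⟨by omega, hQm, heq, h1⟩)⟩
  set θ2 := (θ.erase P).erase Q with hθ2def
  have memθ2 : ∀ y : ℕ × ℕ, y ∈ θ2 ↔ y ≠ Q ∧ y ≠ P ∧ y ∈ θ := by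
    intro y; rw [hθ2def]; simp [Finset.mem_erase, and_assoc]
  set S := θ2.filter (fun y => Q.1 - 1 ≤ y.1 ∧ y.2 ≤ Q.2) with hSdef
  have hQmS : ((Q.1 - 1 : ℕ), Q.2) ∈ S := by
    refine Finset.mem_filter.2 ⟨(memθ2 _).2 ⟨?_, ?_, hQm⟩, le_refl _, le_refl _⟩
    · intro h'; have := congrArg Prod.fst h'; simp only at this; omega
    · intro h'; have := congrArg Prod.snd h'; simp only at this; omega
  set N := θ.sup Prod.fst with hNdef
  obtain ⟨M, hMS, hMmin⟩ := Finset.exists_min_image S (fun y => (N - y.1) + y.2) ⟨_, hQmS⟩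
  have hMθ2 : M ∈ θ2 := (Finset.mem_filter.1 hMS).1
  have hMθ : M ∈ θ := ((memθ2 M).1 hMθ2).2.2
  have hMP : M ≠ P := ((memθ2 M).1 hMθ2).2.1
  have hMQ : M ≠ Q := ((memθ2 M).1 hMθ2).1
  have hM1 : Q.1 - 1 ≤ M.1 := (Finset.mem_filter.1 hMS).2.1
  have hM2 : M.2 ≤ Q.2 := (Finset.mem_filter.1 hMS).2.2
  have hmin : ∀ y ∈ θ2, M.1 ≤ y.1 → y.2 ≤ M.2 → y = M := by
    intro y hy hy1 hy2
    have hyS : y ∈ S := Finset.mem_filter.2 ⟨hy, by omega, by omega⟩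
    have hle := hMmin y hyS
    have hyN : y.1 ≤ N := Finset.le_sup (f := Prod.fst) ((memθ2 y).1 hy).2.2
    have hMN : M.1 ≤ N := Finset.le_sup (f := Prod.fst) hMθ
    have e1 : y.1 = M.1 := by omega
    have e2 : y.2 = M.2 := by omega
    exact Prod.ext e1 e2
  have hM1' : M.1 = Q.1 - 1 := by
    by_contra hne
    exact hFQ.2 M ⟨hMθ, hQ, Or.inl ⟨hMQ, by omega, hM2⟩⟩
  have hPM2 : P.2 < M.2 := by
    by_contra hle
    push_neg at hle
    exact hFP.2 M ⟨hMθ, hP, Or.inl ⟨hMP, by omega, hle⟩⟩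
  have hY : (P.1, M.2) ∈ θ := hrow M.2 (by omega) hM2
  have haY : T P ≤ T (P.1, M.2) := hWI P hP _ hY (Or.inl ⟨rfl, by simp; omega⟩)
  have hYM : T (P.1, M.2) ≤ T M := hWI (P.1, M.2) hY M hMθ (Or.inr ⟨rfl, by simp; omega⟩)
  have hMz : T M ≤ T (Q.1 - 1, Q.2) := hWI M hMθ _ hQm (Or.inl ⟨by simp [hM1'], by simp [hM2]⟩)
  have hcb : T M < T Q := lt_of_le_of_lt hMz (lt_of_le_of_ne hzb hzb')
  have hac : T P < T M := by
    rcases lt_or_eq_of_le (le_trans haY hYM) with h | h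
    · exact h
    · exfalso
      have hR1 : (P.1, P.2 + 1) ∈ θ := hrow (P.2 + 1) (by omega) (by omega)
      have e1 : T P ≤ T (P.1, P.2 + 1) := hWI P hP _ hR1 (Or.inl ⟨rfl, by simp⟩)
      have e2 : T (P.1, P.2 + 1) ≤ T (P.1, M.2) := hWI _ hR1 _ hY (Or.inl ⟨rfl, by simp; omega⟩)
      have e3 : T (P.1, P.2 + 1) = T P := by omega
      exact hFQ.2 P ⟨hP, hQ, Or.inr (Or.inr ⟨hR1, e3, h2⟩)⟩
  have hFM : Firstable θ2 T M := by
    refine ⟨hMθ2, fun y hy => ?_⟩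
    obtain ⟨hyθ2, _, hd⟩ := hy
    have hyθ : y ∈ θ := ((memθ2 y).1 hyθ2).2.2
    rcases hd with h | h | h
    · exact h.1 (hmin y hyθ2 h.2.1 h.2.2)
    · apply hFP.2 y
      refine ⟨hyθ, hP, Or.inr (Or.inl ⟨h.1, ((memθ2 _).1 h.2.1).2.2, h.2.2.1, by omega⟩)⟩
    · apply hFQ.2 y
      exact ⟨hyθ, hQ, Or.inr (Or.inr ⟨((memθ2 _).1 h.1).2.2, h.2.1, by omega⟩)⟩
  have hoPQ : IsRO θ2 T ((o.erase P).erase Q) := isRO_erase Q (isRO_erase P ho)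
  have hoPQM : IsRO (θ2.erase M) T (((o.erase P).erase Q).erase M) := isRO_erase M hoPQ
  have hr5 : IsRO θ2 T (M :: ((o.erase P).erase Q).erase M) := isRO_cons hFM hoPQM
  have hFQ' : Firstable (θ.erase P) T Q := firstable_mono hFQ (Ne.symm hPQ)
  have hFP' : Firstable (θ.erase Q) T P := firstable_mono hFP hPQ
  have hO1 : IsRO θ T (P :: Q :: M :: ((o.erase P).erase Q).erase M) :=
    isRO_cons hFP (isRO_cons hFQ' hr5)
  have hcomm : (θ.erase P).erase Q = (θ.erase Q).erase P := by
    ext x; simp only [Finset.mem_erase]; tauto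
  have hr5' : IsRO ((θ.erase Q).erase P) T (M :: ((o.erase P).erase Q).erase M) := by
    rw [← hcomm]; exact hr5
  have hO2 : IsRO θ T (Q :: P :: M :: ((o.erase P).erase Q).erase M) :=
    isRO_cons hFQ (isRO_cons hFP' hr5')
  refine ⟨M :: ((o.erase P).erase Q).erase M, hO1, hO2, ?_⟩
  have := KKnuthStep.bac [] (((((o.erase P).erase Q).erase M)).map T) (T P) (T Q) (T M) hac hcb
  simpa using this

lemma main_aux : ∀ (n : ℕ) (θ : Finset (ℕ × ℕ)) (T : ℕ × ℕ → ℤ), θ.card ≤ n →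
    HookClosed θ → WeaklyIncr θ T →
    ∀ o o' : List (ℕ × ℕ), IsRO θ T o → IsRO θ T o' → KKnuth (o.map T) (o'.map T) := by
  intro n
  induction n with
  | zero =>
    intro θ T hcard hHC hWI o o' ho ho'
    have hθ : θ = ∅ := Finset.card_eq_zero.1 (le_antisymm hcard (Nat.zero_le _))
    subst hθ
    have h1 : o = [] := by
      cases o with
      | nil => rfl
      | cons h t => exact absurd ((ho.2.1 h).1 (by simp)) (by simp)
    have h2 : o' = [] := by
      cases o' with
      | nil => rfl
      | cons h t => exact absurd ((ho'.2.1 h).1 (by simp)) (by simp)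
    subst h1; subst h2
    exact Relation.EqvGen.refl _
  | succ n IH =>
    intro θ T hcard hHC hWI o o' ho ho'
    cases o with
    | nil =>
      have hθ : θ = ∅ := by
        ext x
        simp only [Finset.notMem_empty, iff_false]
        intro hx
        exact absurd ((ho.2.1 x).2 hx) (by simp)
      subst hθ
      have h2 : o' = [] := by
        cases o' with
        | nil => rfl
        | cons h t => exact absurd ((ho'.2.1 h).1 (by simp)) (by simp)
      subst h2
      exact Relation.EqvGen.refl _
    | cons P t =>
      cases o' with
      | nil =>
        have hP : P ∈ θ := (ho.2.1 P).1 (by simp)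
        have := (ho'.2.1 P).2 hP
        simp at this
      | cons Q t' =>
        have hFP := head_firstable ho
        have hFQ := head_firstable ho'
        have hP : P ∈ θ := hFP.1
        have hQ : Q ∈ θ := hFQ.1
        have hcard' : ∀ x ∈ θ, (θ.erase x).card ≤ n := fun x hx => by
          rw [Finset.card_erase_of_mem hx]; omega
        by_cases hPQ : P = Q
        · subst hPQ
          have e := IH (θ.erase P) T (hcard' P hP) (hookClosed_erase hHC hFP)
            (weaklyIncr_erase hWI) t t' (tail_isRO ho) (tail_isRO ho')
          simp only [List.map_cons]
          exact kknuth_cons (T P) e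
        · have hnp : ¬ (P.1 ≤ Q.1 ∧ Q.2 ≤ P.2) := fun h =>
            hFP.2 Q ⟨hQ, hP, Or.inl ⟨Ne.symm hPQ, h.1, h.2⟩⟩
          have hnq : ¬ (Q.1 ≤ P.1 ∧ P.2 ≤ Q.2) := fun h =>
            hFQ.2 P ⟨hP, hQ, Or.inl ⟨hPQ, h.1, h.2⟩⟩
          rcases (by omega : (P.1 < Q.1 ∧ P.2 < Q.2) ∨ (Q.1 < P.1 ∧ Q.2 < P.2)) with
            ⟨d1, d2⟩ | ⟨d1, d2⟩
          · obtain ⟨r, hO1, hO2, hstep⟩ := key hHC hWI hFP hFQ d1 d2 ho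
            have e1 : KKnuth ((P :: t).map T) ((P :: Q :: r).map T) := by
              have e := IH (θ.erase P) T (hcard' P hP) (hookClosed_erase hHC hFP)
                (weaklyIncr_erase hWI) t (Q :: r) (tail_isRO ho) (tail_isRO hO1)
              simp only [List.map_cons]
              exact kknuth_cons (T P) e
            have e3 : KKnuth ((Q :: P :: r).map T) ((Q :: t').map T) := by
              have e := IH (θ.erase Q) T (hcard' Q hQ) (hookClosed_erase hHC hFQ)
                (weaklyIncr_erase hWI) (P :: r) t' (tail_isRO hO2) (tail_isRO ho')
              simp only [List.map_cons]
              exact kknuth_cons (T Q) e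
            exact Relation.EqvGen.trans _ _ _
              (Relation.EqvGen.trans _ _ _ e1 (Relation.EqvGen.rel _ _ hstep)) e3
          · obtain ⟨r, hO1, hO2, hstep⟩ := key hHC hWI hFQ hFP d1 d2 ho
            have e1 : KKnuth ((P :: t).map T) ((P :: Q :: r).map T) := by
              have e := IH (θ.erase P) T (hcard' P hP) (hookClosed_erase hHC hFP)
                (weaklyIncr_erase hWI) t (Q :: r) (tail_isRO ho) (tail_isRO hO2)
              simp only [List.map_cons]
              exact kknuth_cons (T P) e
            have e3 : KKnuth ((Q :: P :: r).map T) ((Q :: t').map T) := by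
              have e := IH (θ.erase Q) T (hcard' Q hQ) (hookClosed_erase hHC hFQ)
                (weaklyIncr_erase hWI) (P :: r) t' (tail_isRO hO1) (tail_isRO ho')
              simp only [List.map_cons]
              exact kknuth_cons (T Q) e
            exact Relation.EqvGen.trans _ _ _
              (Relation.EqvGen.trans _ _ _ e1
                (Relation.EqvGen.symm _ _ (Relation.EqvGen.rel _ _ hstep))) e3


theorem reading_words_kknuth_equivalent
    (θ : Finset (ℕ × ℕ)) (T : ℕ × ℕ → ℤ)
    (hθ : HookClosed θ) (hT : WeaklyIncr θ T)
    (w w' : List ℤ) (hw : IsReadingWord θ T w) (hw' : IsReadingWord θ T w') :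
    KKnuth w w' := by
  obtain ⟨ord, hnd, hmem, heq, c1, c2, c3⟩ := hw
  obtain ⟨ord', hnd', hmem', heq', c1', c2', c3'⟩ := hw'
  have ho : IsRO θ T ord := by
    refine ⟨hnd, hmem, ?_⟩
    rintro p q ⟨hp, hq, hd⟩
    rcases hd with h | h | h
    · exact c1 p hp q hq h.1 h.2.1 h.2.2
    · exact c2 p hp h.1 h.2.1 h.2.2.1 q hq h.2.2.2
    · exact c3 p hp h.1 h.2.1 q hq h.2.2
  have ho' : IsRO θ T ord' := by
    refine ⟨hnd', hmem', ?_⟩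
    rintro p q ⟨hp, hq, hd⟩
    rcases hd with h | h | h
    · exact c1' p hp q hq h.1 h.2.1 h.2.2
    · exact c2' p hp h.1 h.2.1 h.2.2.1 q hq h.2.2.2
    · exact c3' p hp h.1 h.2.1 q hq h.2.2
  rw [heq, heq']
  exact main_aux θ.card θ T (le_refl _) hθ hT ord ord' ho ho'
end
end
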